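/- arXiv:1810.01704 — 3 statements merged into one kernel-verified Lean document; each statement's English description precedes it below -/
import Mathlib

section
/- If H is a nontrivial Heyting algebra having the Density and Splitting properties, then every finite nontrivial Heyting algebra B admits an injective Heyting-algebra homomorphism into H. -/
/-- `StrongOrd b a` means `b ≫ a`, i.e. `b ⇨ a = a` and `a ≤ b`. -/
def StrongOrd {H : Type*} [HeytingAlgebra H] (b a : H) : Prop := b ⇨ a = a ∧ a ≤ b

/-- The Density property. -/
def HasDensity (H : Type*) [HeytingAlgebra H] : Prop :=
  ∀ a c : H, StrongOrd c a → a ≠ ⊤ → ∃ b : H, b ≠ ⊤ ∧ StrongOrd c b ∧ StrongOrd b a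

/-- The Splitting property. -/
def HasSplitting (H : Type*) [HeytingAlgebra H] : Prop :=
  ∀ a b₁ b₂ : H, StrongOrd (b₁ ⊓ b₂) a → a ≠ ⊤ →
    ∃ a₁ a₂ : H, a₁ ≠ ⊤ ∧ a₂ ≠ ⊤ ∧ a₂ ⇨ a = a₁ ∧ a₁ ⇨ a = a₂ ∧
      a₁ ≤ b₁ ∧ a₂ ≤ b₂ ∧ a₁ ⊔ a₂ = b₁ ⊔ b₂

/-! ### Auxiliary Heyting-algebra identities -/

section Identities

variable {C : Type*} [HeytingAlgebra C]

lemma DS.himp_eq_self_of_le {U b z : C} (hbU : b ≤ U) (hUb : U ⇨ b = b) (hz : z ≤ b) :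
    U ⇨ z = z := by
  refine le_antisymm ?_ le_himp
  have h1 : U ⇨ z ≤ b := hUb ▸ himp_le_himp_left hz
  have h2 : U ⇨ z ≤ U := h1.trans hbU
  have h3 : (U ⇨ z) ⊓ U ≤ z := by rw [inf_comm, inf_himp]; exact inf_le_right
  calc U ⇨ z = (U ⇨ z) ⊓ U := (inf_eq_left.mpr h2).symm
    _ ≤ z := h3

lemma DS.himp_sup_himp (x c d : C) : x ⇨ ((x ⇨ c) ⊔ (x ⇨ d)) = x ⇨ (c ⊔ d) := by
  refine le_antisymm ?_ (himp_le_himp_left (sup_le_sup le_himp le_himp))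
  rw [le_himp_iff, inf_comm, inf_himp, inf_sup_left, inf_himp, inf_himp]
  exact sup_le_sup inf_le_right inf_le_right

lemma DS.himp_himp_himp (x c d : C) : (x ⇨ c) ⇨ (x ⇨ d) = x ⇨ (c ⇨ d) := by
  rw [himp_himp, himp_himp]
  have : (x ⇨ c) ⊓ x = x ⊓ c := by rw [inf_comm, inf_himp]
  rw [this]

end Identities

/-! ### Heyting algebra structure on `Set.Iic m` -/

section Iic

variable {C : Type*} [HeytingAlgebra C] (m : C)

instance DS.iicHImp : HImp (Set.Iic m) :=
  ⟨fun p q => ⟨(p.1 ⇨ q.1) ⊓ m, Set.mem_Iic.mpr inf_le_right⟩⟩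

lemma DS.iic_himp_val (p q : Set.Iic m) : (p ⇨ q).1 = (p.1 ⇨ q.1) ⊓ m := rfl

instance DS.iicGHA : GeneralizedHeytingAlgebra (Set.Iic m) :=
  ⟨fun p q r => by
    constructor
    · intro h
      have h' : p.1 ≤ (q.1 ⇨ r.1) ⊓ m := h
      exact le_himp_iff.mp (h'.trans inf_le_left)
    · intro h
      have h' : (p.1 : C) ⊓ q.1 ≤ r.1 := h
      exact (le_inf (le_himp_iff.mpr h') p.2 : p.1 ≤ (q.1 ⇨ r.1) ⊓ m)⟩

instance DS.iicHasCompl : Compl (Set.Iic m) := ⟨fun p => p ⇨ ⊥⟩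

instance DS.iicHeyting : HeytingAlgebra (Set.Iic m) := ⟨fun _ => rfl⟩

end Iic

/-! ### Heyting algebra structure on the "quotient" `{z // x ⇨ z = z}` -/

section Fix

variable {C : Type*} [HeytingAlgebra C] (x : C)

instance DS.fixLattice : Lattice {z : C // x ⇨ z = z} :=
  { (inferInstance : PartialOrder {z : C // x ⇨ z = z}) with
    inf := fun p q => ⟨p.1 ⊓ q.1, by rw [himp_inf_distrib, p.2, q.2]⟩
    sup := fun p q => ⟨x ⇨ (p.1 ⊔ q.1), by rw [himp_himp, inf_idem]⟩
    inf_le_left := fun p q => show p.1 ⊓ q.1 ≤ p.1 from inf_le_left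
    inf_le_right := fun p q => show p.1 ⊓ q.1 ≤ q.1 from inf_le_right
    le_inf := fun p q r h1 h2 => show p.1 ≤ q.1 ⊓ r.1 from le_inf h1 h2
    le_sup_left := fun p q =>
      show p.1 ≤ x ⇨ (p.1 ⊔ q.1) from le_sup_left.trans le_himp
    le_sup_right := fun p q =>
      show q.1 ≤ x ⇨ (p.1 ⊔ q.1) from le_sup_right.trans le_himp
    sup_le := fun p q r h1 h2 =>
      show x ⇨ (p.1 ⊔ q.1) ≤ r.1 from r.2 ▸ himp_le_himp_left (sup_le h1 h2) }

instance DS.fixTop : Top {z : C // x ⇨ z = z} := ⟨⟨⊤, himp_top⟩⟩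

instance DS.fixOrderTop : OrderTop {z : C // x ⇨ z = z} :=
  ⟨fun p => show p.1 ≤ ⊤ from le_top⟩

instance DS.fixBot : Bot {z : C // x ⇨ z = z} :=
  ⟨⟨x ⇨ ⊥, by rw [himp_himp, inf_idem]⟩⟩

instance DS.fixOrderBot : OrderBot {z : C // x ⇨ z = z} :=
  ⟨fun p => show x ⇨ ⊥ ≤ p.1 from p.2 ▸ himp_le_himp_left bot_le⟩

instance DS.fixHImp : HImp {z : C // x ⇨ z = z} :=
  ⟨fun p q => ⟨p.1 ⇨ q.1, by rw [← DS.himp_himp_himp, p.2, q.2]⟩⟩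

instance DS.fixGHA : GeneralizedHeytingAlgebra {z : C // x ⇨ z = z} :=
  ⟨fun p q r => show p.1 ≤ q.1 ⇨ r.1 ↔ p.1 ⊓ q.1 ≤ r.1 from le_himp_iff⟩

instance DS.fixHasCompl : Compl {z : C // x ⇨ z = z} := ⟨fun p => p ⇨ ⊥⟩

instance DS.fixHeyting : HeytingAlgebra {z : C // x ⇨ z = z} := ⟨fun _ => rfl⟩

/-- The canonical projection onto the quotient. -/
def DS.fixProj (c : C) : {z : C // x ⇨ z = z} := ⟨x ⇨ c, by rw [himp_himp, inf_idem]⟩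

lemma DS.fixProj_top : DS.fixProj x ⊤ = ⊤ :=
  Subtype.ext (show x ⇨ (⊤ : C) = ⊤ from himp_top)

lemma DS.fixProj_bot : DS.fixProj x ⊥ = ⊥ := Subtype.ext rfl

lemma DS.fixProj_inf (c d : C) :
    DS.fixProj x (c ⊓ d) = DS.fixProj x c ⊓ DS.fixProj x d :=
  Subtype.ext (himp_inf_distrib x c d)

lemma DS.fixProj_sup (c d : C) :
    DS.fixProj x (c ⊔ d) = DS.fixProj x c ⊔ DS.fixProj x d :=
  Subtype.ext (DS.himp_sup_himp x c d).symm

lemma DS.fixProj_himp (c d : C) :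
    DS.fixProj x (c ⇨ d) = DS.fixProj x c ⇨ DS.fixProj x d :=
  Subtype.ext (DS.himp_himp_himp x c d).symm

end Fix

/-! ### Strong realizations -/

/-- A strong realization of `C` in `H` over the pair `(U, D)`. -/
structure DS.SReal {H : Type*} {C : Type*} [HeytingAlgebra H] [HeytingAlgebra C]
    (U D : H) (f : C → H) : Prop where
  map_top : f ⊤ = U
  map_bot : f ⊥ = D
  map_inf : ∀ a b : C, f (a ⊓ b) = f a ⊓ f b
  map_sup : ∀ a b : C, f (a ⊔ b) = f a ⊔ f b
  map_himp : ∀ a b : C, ¬ a ≤ b → f (a ⇨ b) = f a ⇨ f b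
  himp_le : ∀ a b : C, ¬ a ≤ b → f a ⇨ f b ≤ U
  inj : Function.Injective f

namespace DS.SReal

variable {H : Type*} {C : Type*} [HeytingAlgebra H] [HeytingAlgebra C]
  {U D : H} {f : C → H}

lemma mono (hf : DS.SReal U D f) {a b : C} (h : a ≤ b) : f a ≤ f b := by
  have h1 : a ⊓ b = a := inf_eq_left.mpr h
  have h2 : f a = f a ⊓ f b := by rw [← hf.map_inf, h1]
  rw [h2]; exact inf_le_right

lemma le_U (hf : DS.SReal U D f) (a : C) : f a ≤ U :=
  hf.map_top ▸ hf.mono le_top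

lemma D_le (hf : DS.SReal U D f) (a : C) : D ≤ f a :=
  hf.map_bot ▸ hf.mono bot_le

end DS.SReal

/-! ### The key induction -/

theorem DS.key {H : Type*} [HeytingAlgebra H] (hd : HasDensity H) (hs : HasSplitting H) :
    ∀ (n : ℕ) (C : Type u) [HeytingAlgebra C] [Finite C], Nat.card C ≤ n →
      (⊥ : C) ≠ ⊤ → ∀ U D : H, D ≤ U → U ⇨ D = D → D ≠ ⊤ →
      ∃ f : C → H, DS.SReal U D f := by
  intro n
  induction n with
  | zero =>
    intro C _ _ hcard hnt U D _ _ _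
    exfalso
    have : 0 < Nat.card C := Nat.card_pos
    omega
  | succ n ih =>
    intro C _ _ hcard hnt U D hDU hUD hDt
    by_cases hsplit : ∃ x y : C, x ≠ ⊤ ∧ y ≠ ⊤ ∧ x ⊔ y = ⊤
    · -- top is join-reducible : use the Splitting property
      obtain ⟨x, y, hx, hy, hxy⟩ := hsplit
      have hxbot : x ≠ ⊥ := by
        intro h; rw [h, bot_sup_eq] at hxy; exact hy hxy
      have hybot : y ≠ ⊥ := by
        intro h; rw [h, sup_bot_eq] at hxy; exact hx hxy
      obtain ⟨a₁, a₂, ha1t, ha2t, h21, h12, h1U, h2U, hsup⟩ :=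
        hs D U U ⟨by rwa [inf_idem], by rwa [inf_idem]⟩ hDt
      rw [sup_idem] at hsup
      have hD1 : D ≤ a₁ := h21 ▸ le_himp
      have hD2 : D ≤ a₂ := h12 ▸ le_himp
      have hUa1 : U ⇨ a₁ = a₁ := by
        conv_lhs => rw [← h21]
        rw [himp_himp, inf_comm, ← himp_himp, hUD, h21]
      have hUa2 : U ⇨ a₂ = a₂ := by
        conv_lhs => rw [← h12]
        rw [himp_himp, inf_comm, ← himp_himp, hUD, h12]
      have hinf12 : a₁ ⊓ a₂ = D := by
        refine le_antisymm ?_ (le_inf hD1 hD2)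
        conv_lhs => rw [← h12]
        rw [inf_himp]
        exact inf_le_right
      classical
      have _fC := Fintype.ofFinite C
      -- cardinalities of the two quotients
      have hcx : Nat.card {z : C // x ⇨ z = z} ≤ n := by
        have hlt : Nat.card {z : C // x ⇨ z = z} < Nat.card C := by
          rw [Nat.card_eq_fintype_card, Nat.card_eq_fintype_card]
          refine Fintype.card_subtype_lt (x := x) ?_
          rw [himp_self]; exact fun h => hx h.symm
        omega
      have hcy : Nat.card {z : C // y ⇨ z = z} ≤ n := by
        have hlt : Nat.card {z : C // y ⇨ z = z} < Nat.card C := by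
          rw [Nat.card_eq_fintype_card, Nat.card_eq_fintype_card]
          refine Fintype.card_subtype_lt (x := y) ?_
          rw [himp_self]; exact fun h => hy h.symm
        omega
      have hntx : (⊥ : {z : C // x ⇨ z = z}) ≠ ⊤ := by
        intro h
        have h' : x ⇨ (⊥ : C) = ⊤ := congrArg Subtype.val h
        exact hxbot (le_bot_iff.mp (himp_eq_top_iff.mp h'))
      have hnty : (⊥ : {z : C // y ⇨ z = z}) ≠ ⊤ := by
        intro h
        have h' : y ⇨ (⊥ : C) = ⊤ := congrArg Subtype.val h
        exact hybot (le_bot_iff.mp (himp_eq_top_iff.mp h'))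
      obtain ⟨f₁, hf₁⟩ := ih {z : C // x ⇨ z = z} hcx hntx U a₁ h1U hUa1 ha1t
      obtain ⟨f₂, hf₂⟩ := ih {z : C // y ⇨ z = z} hcy hnty U a₂ h2U hUa2 ha2t
      have hdecomp : ∀ c : C, (x ⇨ c) ⊓ (y ⇨ c) = c := fun c => by
        rw [← sup_himp_distrib, hxy, top_himp]
      -- the two key relative-implication computations
      have claim1 : ∀ A₁ A₂ B₁ : H, A₁ ≤ U → a₂ ≤ A₂ → a₁ ≤ B₁ →
          (A₁ ⊓ A₂) ⇨ B₁ = A₁ ⇨ B₁ := by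
        intro A₁ A₂ B₁ hA1U h2A h1B
        refine le_antisymm ?_ (himp_le_himp_right inf_le_left)
        rw [le_himp_iff]
        set W := (A₁ ⊓ A₂) ⇨ B₁ with hW_def
        have hW : W ⊓ (A₁ ⊓ A₂) ≤ B₁ := by
          rw [inf_comm, inf_himp]; exact inf_le_right
        calc W ⊓ A₁ = (W ⊓ A₁) ⊓ U := (inf_eq_left.mpr (inf_le_right.trans hA1U)).symm
          _ = (W ⊓ A₁) ⊓ (a₁ ⊔ a₂) := by rw [hsup]
          _ = ((W ⊓ A₁) ⊓ a₁) ⊔ ((W ⊓ A₁) ⊓ a₂) := inf_sup_left _ _ _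
          _ ≤ B₁ := by
              refine sup_le (inf_le_right.trans h1B) ?_
              refine le_trans ?_ hW
              exact le_inf (inf_le_left.trans inf_le_left)
                (le_inf (inf_le_left.trans inf_le_right) (inf_le_right.trans h2A))
      have claim2 : ∀ A₁ A₂ B₂ : H, A₂ ≤ U → a₁ ≤ A₁ → a₂ ≤ B₂ →
          (A₁ ⊓ A₂) ⇨ B₂ = A₂ ⇨ B₂ := by
        intro A₁ A₂ B₂ hA2U h1A h2B
        refine le_antisymm ?_ (himp_le_himp_right inf_le_right)
        rw [le_himp_iff]
        set W := (A₁ ⊓ A₂) ⇨ B₂ with hW_def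
        have hW : W ⊓ (A₁ ⊓ A₂) ≤ B₂ := by
          rw [inf_comm, inf_himp]; exact inf_le_right
        calc W ⊓ A₂ = (W ⊓ A₂) ⊓ U := (inf_eq_left.mpr (inf_le_right.trans hA2U)).symm
          _ = (W ⊓ A₂) ⊓ (a₁ ⊔ a₂) := by rw [hsup]
          _ = ((W ⊓ A₂) ⊓ a₁) ⊔ ((W ⊓ A₂) ⊓ a₂) := inf_sup_left _ _ _
          _ ≤ B₂ := by
              refine sup_le ?_ (inf_le_right.trans h2B)
              refine le_trans ?_ hW
              exact le_inf (inf_le_left.trans inf_le_left)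
                (le_inf (inf_le_right.trans h1A) (inf_le_left.trans inf_le_right))
      have keyhimp : ∀ (p q : {z : C // x ⇨ z = z}) (r s : {z : C // y ⇨ z = z}),
          (f₁ p ⊓ f₂ r) ⇨ (f₁ q ⊓ f₂ s) = (f₁ p ⇨ f₁ q) ⊓ (f₂ r ⇨ f₂ s) := by
        intro p q r s
        rw [himp_inf_distrib]
        rw [claim1 (f₁ p) (f₂ r) (f₁ q) (hf₁.le_U p) (hf₂.D_le r) (hf₁.D_le q)]
        rw [claim2 (f₁ p) (f₂ r) (f₂ s) (hf₂.le_U r) (hf₁.D_le p) (hf₂.D_le s)]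
      have hle_half : ∀ {A₁ A₂ B₁ B₂ : H}, A₁ ≤ U → a₁ ≤ B₁ → a₂ ≤ A₂ →
          A₁ ⊓ A₂ ≤ B₁ ⊓ B₂ → A₁ ≤ B₁ := by
        intro A₁ A₂ B₁ B₂ hA1U h1B h2A hle'
        calc A₁ = A₁ ⊓ U := (inf_eq_left.mpr hA1U).symm
          _ = A₁ ⊓ (a₁ ⊔ a₂) := by rw [hsup]
          _ = (A₁ ⊓ a₁) ⊔ (A₁ ⊓ a₂) := inf_sup_left _ _ _
          _ ≤ B₁ := by
              refine sup_le (inf_le_right.trans h1B) ?_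
              have : A₁ ⊓ a₂ ≤ A₁ ⊓ A₂ := inf_le_inf_left _ h2A
              exact (this.trans hle').trans inf_le_left
      have hle_half2 : ∀ {A₁ A₂ B₁ B₂ : H}, A₂ ≤ U → a₂ ≤ B₂ → a₁ ≤ A₁ →
          A₁ ⊓ A₂ ≤ B₁ ⊓ B₂ → A₂ ≤ B₂ := by
        intro A₁ A₂ B₁ B₂ hA2U h2B h1A hle'
        calc A₂ = A₂ ⊓ U := (inf_eq_left.mpr hA2U).symm
          _ = A₂ ⊓ (a₁ ⊔ a₂) := by rw [hsup]
          _ = (A₂ ⊓ a₁) ⊔ (A₂ ⊓ a₂) := inf_sup_left _ _ _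
          _ ≤ B₂ := by
              refine sup_le ?_ (inf_le_right.trans h2B)
              have : A₂ ⊓ a₁ ≤ A₁ ⊓ A₂ := by
                exact le_inf (inf_le_right.trans h1A) inf_le_left
              exact (this.trans hle').trans inf_le_right
      refine ⟨fun c => f₁ (DS.fixProj x c) ⊓ f₂ (DS.fixProj y c), ?_, ?_, ?_, ?_, ?_, ?_, ?_⟩
      · show f₁ (DS.fixProj x ⊤) ⊓ f₂ (DS.fixProj y ⊤) = U
        rw [DS.fixProj_top, DS.fixProj_top, hf₁.map_top, hf₂.map_top, inf_idem]
      · show f₁ (DS.fixProj x ⊥) ⊓ f₂ (DS.fixProj y ⊥) = D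
        rw [DS.fixProj_bot, DS.fixProj_bot, hf₁.map_bot, hf₂.map_bot, hinf12]
      · intro c d
        show f₁ (DS.fixProj x (c ⊓ d)) ⊓ f₂ (DS.fixProj y (c ⊓ d)) = _
        rw [DS.fixProj_inf, DS.fixProj_inf, hf₁.map_inf, hf₂.map_inf, inf_inf_inf_comm]
      · intro c d
        show f₁ (DS.fixProj x (c ⊔ d)) ⊓ f₂ (DS.fixProj y (c ⊔ d)) = _
        rw [DS.fixProj_sup, DS.fixProj_sup, hf₁.map_sup, hf₂.map_sup]
        set A₁ := f₁ (DS.fixProj x c)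
        set A₂ := f₂ (DS.fixProj y c)
        set B₁ := f₁ (DS.fixProj x d)
        set B₂ := f₂ (DS.fixProj y d)
        refine le_antisymm ?_ (sup_le (inf_le_inf le_sup_left le_sup_left)
          (inf_le_inf le_sup_right le_sup_right))
        have hXU : (A₁ ⊔ B₁) ⊓ (A₂ ⊔ B₂) ≤ U :=
          inf_le_left.trans (sup_le (hf₁.le_U _) (hf₁.le_U _))
        have h1 : ((A₁ ⊔ B₁) ⊓ (A₂ ⊔ B₂)) ⊓ a₁ ≤ (A₁ ⊓ A₂) ⊔ (B₁ ⊓ B₂) := by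
          calc ((A₁ ⊔ B₁) ⊓ (A₂ ⊔ B₂)) ⊓ a₁ ≤ (A₂ ⊔ B₂) ⊓ a₁ :=
                inf_le_inf_right _ inf_le_right
            _ = (A₂ ⊓ a₁) ⊔ (B₂ ⊓ a₁) := inf_sup_right _ _ _
            _ ≤ (A₁ ⊓ A₂) ⊔ (B₁ ⊓ B₂) := by
                refine sup_le_sup ?_ ?_
                · exact le_inf (inf_le_right.trans (hf₁.D_le _)) inf_le_left
                · exact le_inf (inf_le_right.trans (hf₁.D_le _)) inf_le_left
        have h2 : ((A₁ ⊔ B₁) ⊓ (A₂ ⊔ B₂)) ⊓ a₂ ≤ (A₁ ⊓ A₂) ⊔ (B₁ ⊓ B₂) := by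
          calc ((A₁ ⊔ B₁) ⊓ (A₂ ⊔ B₂)) ⊓ a₂ ≤ (A₁ ⊔ B₁) ⊓ a₂ :=
                inf_le_inf_right _ inf_le_left
            _ = (A₁ ⊓ a₂) ⊔ (B₁ ⊓ a₂) := inf_sup_right _ _ _
            _ ≤ (A₁ ⊓ A₂) ⊔ (B₁ ⊓ B₂) := by
                refine sup_le_sup ?_ ?_
                · exact le_inf inf_le_left (inf_le_right.trans (hf₂.D_le _))
                · exact le_inf inf_le_left (inf_le_right.trans (hf₂.D_le _))
        calc (A₁ ⊔ B₁) ⊓ (A₂ ⊔ B₂)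
            = ((A₁ ⊔ B₁) ⊓ (A₂ ⊔ B₂)) ⊓ (a₁ ⊔ a₂) := by
              rw [hsup]; exact (inf_eq_left.mpr hXU).symm
          _ = (((A₁ ⊔ B₁) ⊓ (A₂ ⊔ B₂)) ⊓ a₁) ⊔ (((A₁ ⊔ B₁) ⊓ (A₂ ⊔ B₂)) ⊓ a₂) :=
              inf_sup_left _ _ _
          _ ≤ (A₁ ⊓ A₂) ⊔ (B₁ ⊓ B₂) := sup_le h1 h2
      · intro c d hcd
        show f₁ (DS.fixProj x (c ⇨ d)) ⊓ f₂ (DS.fixProj y (c ⇨ d)) = _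
        rw [DS.fixProj_himp, DS.fixProj_himp, keyhimp]
        have hnb : ¬(DS.fixProj x c ≤ DS.fixProj x d ∧ DS.fixProj y c ≤ DS.fixProj y d) := by
          rintro ⟨h1, h2⟩
          apply hcd
          have h1' : x ⇨ c ≤ x ⇨ d := h1
          have h2' : y ⇨ c ≤ y ⇨ d := h2
          calc c = (x ⇨ c) ⊓ (y ⇨ c) := (hdecomp c).symm
            _ ≤ (x ⇨ d) ⊓ (y ⇨ d) := inf_le_inf h1' h2'
            _ = d := hdecomp d
        by_cases h1 : DS.fixProj x c ≤ DS.fixProj x d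
        · have h2 : ¬ DS.fixProj y c ≤ DS.fixProj y d := fun h => hnb ⟨h1, h⟩
          rw [hf₂.map_himp _ _ h2, himp_eq_top_iff.mpr h1, hf₁.map_top,
            himp_eq_top_iff.mpr (hf₁.mono h1), top_inf_eq]
          exact (inf_eq_right.mpr (hf₂.himp_le _ _ h2)).symm ▸ rfl
        · by_cases h2 : DS.fixProj y c ≤ DS.fixProj y d
          · rw [hf₁.map_himp _ _ h1, himp_eq_top_iff.mpr h2, hf₂.map_top,
              himp_eq_top_iff.mpr (hf₂.mono h2), inf_top_eq]
            exact (inf_eq_left.mpr (hf₁.himp_le _ _ h1)).symm ▸ rfl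
          · rw [hf₁.map_himp _ _ h1, hf₂.map_himp _ _ h2]
      · intro c d hcd
        show (f₁ (DS.fixProj x c) ⊓ f₂ (DS.fixProj y c)) ⇨
          (f₁ (DS.fixProj x d) ⊓ f₂ (DS.fixProj y d)) ≤ U
        rw [keyhimp]
        by_cases h1 : DS.fixProj x c ≤ DS.fixProj x d
        · have h2 : ¬ DS.fixProj y c ≤ DS.fixProj y d := by
            intro h2
            apply hcd
            have h1' : x ⇨ c ≤ x ⇨ d := h1
            have h2' : y ⇨ c ≤ y ⇨ d := h2
            calc c = (x ⇨ c) ⊓ (y ⇨ c) := (hdecomp c).symm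
              _ ≤ (x ⇨ d) ⊓ (y ⇨ d) := inf_le_inf h1' h2'
              _ = d := hdecomp d
          exact inf_le_right.trans (hf₂.himp_le _ _ h2)
        · exact inf_le_left.trans (hf₁.himp_le _ _ h1)
      · intro c d h
        simp only at h
        have e1 : f₁ (DS.fixProj x c) = f₁ (DS.fixProj x d) := by
          refine le_antisymm ?_ ?_
          · exact hle_half (hf₁.le_U _) (hf₁.D_le _) (hf₂.D_le _) (le_of_eq h)
          · exact hle_half (hf₁.le_U _) (hf₁.D_le _) (hf₂.D_le _) (le_of_eq h.symm)
        have e2 : f₂ (DS.fixProj y c) = f₂ (DS.fixProj y d) := by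
          refine le_antisymm ?_ ?_
          · exact hle_half2 (hf₂.le_U _) (hf₂.D_le _) (hf₁.D_le _) (le_of_eq h)
          · exact hle_half2 (hf₂.le_U _) (hf₂.D_le _) (hf₁.D_le _) (le_of_eq h.symm)
        have p1 : DS.fixProj x c = DS.fixProj x d := hf₁.inj e1
        have p2 : DS.fixProj y c = DS.fixProj y d := hf₂.inj e2
        have v1 : x ⇨ c = x ⇨ d := congrArg Subtype.val p1
        have v2 : y ⇨ c = y ⇨ d := congrArg Subtype.val p2
        rw [← hdecomp c, ← hdecomp d, v1, v2]
    · -- top is join-irreducible : use the Density property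
      push_neg at hsplit
      have := Fintype.ofFinite C
      classical
      set m : C := (Finset.univ.filter (· ≠ ⊤)).sup id with hm_def
      have hm_top : m ≠ ⊤ := by
        refine Finset.sup_induction (p := fun z => z ≠ ⊤) hnt
          (fun a ha b hb => hsplit a b ha hb) ?_
        intro b hb; exact (Finset.mem_filter.mp hb).2
      have hle : ∀ z : C, z ≠ ⊤ → z ≤ m := by
        intro z hz
        exact Finset.le_sup (f := id) (Finset.mem_filter.mpr ⟨Finset.mem_univ z, hz⟩)
      by_cases hm : m = ⊥
      · -- `C` is the two-element algebra
        have hall : ∀ c : C, c ≠ ⊤ → c = ⊥ := fun c hc => le_bot_iff.mp (hm ▸ hle c hc)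
        have hDU' : D ≠ U := by
          intro h
          rw [h, himp_self] at hUD
          exact hDt (h.trans hUD.symm)
        refine ⟨fun c => if c = ⊤ then U else D, ?_, ?_, ?_, ?_, ?_, ?_, ?_⟩
        · simp
        · show (if (⊥ : C) = ⊤ then U else D) = D
          rw [if_neg hnt]
        · intro a b
          show (if a ⊓ b = ⊤ then U else D) =
            (if a = ⊤ then U else D) ⊓ (if b = ⊤ then U else D)
          by_cases ha : a = ⊤ <;> by_cases hb : b = ⊤
          · rw [ha, hb, top_inf_eq, if_pos rfl, inf_idem]
          · rw [ha, top_inf_eq, if_pos rfl, if_neg hb]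
            exact (inf_eq_right.mpr hDU).symm
          · rw [hb, inf_top_eq, if_pos rfl, if_neg ha]
            exact (inf_eq_left.mpr hDU).symm
          · have hab : a ⊓ b ≠ ⊤ := fun h => ha (le_antisymm le_top (h ▸ inf_le_left))
            rw [hall a ha, hall b hb, inf_idem, if_neg hnt, inf_idem]
        · intro a b
          show (if a ⊔ b = ⊤ then U else D) =
            (if a = ⊤ then U else D) ⊔ (if b = ⊤ then U else D)
          by_cases ha : a = ⊤ <;> by_cases hb : b = ⊤
          · rw [ha, hb, top_sup_eq, if_pos rfl, sup_idem]
          · rw [ha, top_sup_eq, if_pos rfl, if_neg hb]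
            exact (sup_eq_left.mpr hDU).symm
          · rw [hb, sup_top_eq, if_pos rfl, if_neg ha]
            exact (sup_eq_right.mpr hDU).symm
          · rw [hall a ha, hall b hb, sup_idem, if_neg hnt, sup_idem]
        · intro a b hab
          have ha : a = ⊤ := by
            by_contra h
            exact hab ((hall a h) ▸ bot_le)
          have hb : b ≠ ⊤ := fun h => hab (h ▸ le_top)
          have hb' : b = ⊥ := hall b hb
          show (if a ⇨ b = ⊤ then U else D) =
            (if a = ⊤ then U else D) ⇨ (if b = ⊤ then U else D)
          rw [ha, hb', top_himp, if_neg hnt, if_pos rfl]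
          exact hUD.symm
        · intro a b hab
          have ha : a = ⊤ := by
            by_contra h
            exact hab ((hall a h) ▸ bot_le)
          have hb : b ≠ ⊤ := fun h => hab (h ▸ le_top)
          show (if a = ⊤ then U else D) ⇨ (if b = ⊤ then U else D) ≤ U
          rw [if_pos ha, if_neg hb, hUD]
          exact hDU
        · intro c d h
          simp only at h
          by_cases hc : c = ⊤ <;> by_cases hd' : d = ⊤
          · rw [hc, hd']
          · rw [if_pos hc, if_neg hd'] at h
            exact absurd h.symm hDU'
          · rw [if_neg hc, if_pos hd'] at h
            exact absurd h hDU'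
          · rw [hall c hc, hall d hd']
      · -- use the Density property and the inductive hypothesis on `Set.Iic m`
        obtain ⟨b, hbt, ⟨hUb, hbU⟩, ⟨hbD, hDb⟩⟩ := hd D U ⟨hUD, hDU⟩ hDt
        have hmem : (⊤ : C) ∉ Set.Iic m := fun h => hm_top (top_le_iff.mp h)
        have hcard' : Nat.card (Set.Iic m) ≤ n := by
          have h1 : Nat.card (Set.Iic m) < Nat.card C := by
            rw [Nat.card_eq_fintype_card, Nat.card_eq_fintype_card]
            exact Fintype.card_subtype_lt (x := (⊤ : C)) hmem
          omega
        have hnt' : (⊥ : Set.Iic m) ≠ ⊤ := by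
          intro h
          have h' : (⊥ : C) = m := congrArg Subtype.val h
          exact hm h'.symm
        obtain ⟨f', hf'⟩ := ih (Set.Iic m) hcard' hnt' b D hDb hbD hDt
        have hbU' : ¬ U ≤ b := by
          intro h
          have h2 : U ⇨ b = ⊤ := himp_eq_top_iff.mpr h
          rw [hUb] at h2
          exact hbt h2
        have hf'b : ∀ p : Set.Iic m, f' p ≤ b := fun p => hf'.le_U p
        have hfix : ∀ z : H, z ≤ b → U ⇨ z = z := fun z hz =>
          DS.himp_eq_self_of_le hbU hUb hz
        have hfU : ∀ p : Set.Iic m, f' p ≤ U := fun p => (hf'b p).trans hbU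
        refine ⟨fun c => if h : c = ⊤ then U else f' ⟨c, hle c h⟩, ?_, ?_, ?_, ?_, ?_, ?_, ?_⟩
        · simp
        · show (if h : (⊥ : C) = ⊤ then U else f' ⟨⊥, hle ⊥ h⟩) = D
          rw [dif_neg hnt]
          have : (⟨⊥, hle ⊥ hnt⟩ : Set.Iic m) = ⊥ := Subtype.ext rfl
          rw [this, hf'.map_bot]
        · intro a b'
          show (if h : a ⊓ b' = ⊤ then U else f' ⟨a ⊓ b', hle _ h⟩) = _
          by_cases ha : a = ⊤
          · subst ha
            by_cases hb : b' = ⊤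
            · subst hb
              rw [top_inf_eq, dif_pos rfl, inf_idem]
            · rw [top_inf_eq, dif_pos rfl, dif_neg hb]
              exact (inf_eq_right.mpr (hfU _)).symm
          · by_cases hb : b' = ⊤
            · subst hb
              rw [inf_top_eq, dif_neg ha, dif_pos rfl]
              exact (inf_eq_left.mpr (hfU _)).symm
            · have hab : a ⊓ b' ≠ ⊤ := fun h => ha (le_antisymm le_top (h ▸ inf_le_left))
              rw [dif_neg hab, dif_neg ha, dif_neg hb, ← hf'.map_inf]
              exact congrArg f' (Subtype.ext rfl)
        · intro a b'
          show (if h : a ⊔ b' = ⊤ then U else f' ⟨a ⊔ b', hle _ h⟩) = _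
          by_cases ha : a = ⊤
          · subst ha
            by_cases hb : b' = ⊤
            · subst hb
              rw [top_sup_eq, dif_pos rfl, sup_idem]
            · rw [top_sup_eq, dif_pos rfl, dif_neg hb]
              exact (sup_eq_left.mpr (hfU _)).symm
          · by_cases hb : b' = ⊤
            · subst hb
              rw [sup_top_eq, dif_neg ha, dif_pos rfl]
              exact (sup_eq_right.mpr (hfU _)).symm
            · have hab : a ⊔ b' ≠ ⊤ := hsplit a b' ha hb
              rw [dif_neg hab, dif_neg ha, dif_neg hb, ← hf'.map_sup]
              exact congrArg f' (Subtype.ext rfl)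
        · intro a b' hab
          have hb : b' ≠ ⊤ := fun h => hab (h ▸ le_top)
          by_cases ha : a = ⊤
          · subst ha
            rw [top_himp]
            show (if h : b' = ⊤ then U else f' ⟨b', hle _ h⟩) = _
            rw [dif_neg hb, dif_pos rfl]
            exact (hfix _ (hf'b _)).symm
          · have hab' : a ⇨ b' ≠ ⊤ := fun h => hab (himp_eq_top_iff.mp h)
            show (if h : a ⇨ b' = ⊤ then U else f' ⟨a ⇨ b', hle _ h⟩) = _
            rw [dif_neg hab', dif_neg ha, dif_neg hb]
            have hmk : (⟨a ⇨ b', hle _ hab'⟩ : Set.Iic m) =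
                (⟨a, hle a ha⟩ ⇨ ⟨b', hle b' hb⟩ : Set.Iic m) := by
              apply Subtype.ext
              rw [DS.iic_himp_val]
              exact (inf_eq_left.mpr (hle _ hab')).symm
            rw [hmk, hf'.map_himp]
            exact fun h' => hab (Subtype.mk_le_mk.mp h')
        · intro a b' hab
          have hb : b' ≠ ⊤ := fun h => hab (h ▸ le_top)
          by_cases ha : a = ⊤
          · show (if h : a = ⊤ then U else f' ⟨a, hle _ h⟩) ⇨
              (if h : b' = ⊤ then U else f' ⟨b', hle _ h⟩) ≤ U
            rw [dif_pos ha, dif_neg hb, hfix _ (hf'b _)]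
            exact hfU _
          · show (if h : a = ⊤ then U else f' ⟨a, hle _ h⟩) ⇨
              (if h : b' = ⊤ then U else f' ⟨b', hle _ h⟩) ≤ U
            rw [dif_neg ha, dif_neg hb]
            exact (hf'.himp_le _ _ (fun h' => hab (Subtype.mk_le_mk.mp h'))).trans hbU
        · intro c d h
          simp only at h
          by_cases hc : c = ⊤ <;> by_cases hd' : d = ⊤
          · rw [hc, hd']
          · rw [dif_pos hc, dif_neg hd'] at h
            exact absurd ((le_of_eq h).trans (hf'b _)) hbU'
          · rw [dif_neg hc, dif_pos hd'] at h
            exact absurd ((le_of_eq h.symm).trans (hf'b _)) hbU'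
          · rw [dif_neg hc, dif_neg hd'] at h
            have := hf'.inj h
            exact congrArg Subtype.val this


/-- Every finite nontrivial Heyting algebra embeds into any nontrivial Heyting algebra
having the Density and Splitting properties. -/
theorem finite_embeds_of_density_splitting (H : Type*) [HeytingAlgebra H]
    (hH : (⊥ : H) ≠ ⊤) (hd : HasDensity H) (hs : HasSplitting H)
    (B : Type*) [HeytingAlgebra B] [Finite B] (hB : (⊥ : B) ≠ ⊤) :
    ∃ k : HeytingHom B H, Function.Injective k := by
  obtain ⟨f, hf⟩ := DS.key hd hs (Nat.card B) B le_rfl hB ⊤ ⊥ bot_le top_himp hH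
  have hhimp : ∀ a b : B, f (a ⇨ b) = f a ⇨ f b := by
    intro a b
    by_cases h : a ≤ b
    · rw [himp_eq_top_iff.mpr h, hf.map_top]
      exact (himp_eq_top_iff.mpr (hf.mono h)).symm
    · exact hf.map_himp a b h
  exact ⟨HeytingHom.mk (LatticeHom.mk (SupHom.mk f hf.map_sup) hf.map_inf)
    hf.map_bot hhimp, hf.inj⟩
end

section
/- A countable, locally finite Heyting algebra H is existentially closed if and only if the following holds: for every finite subalgebra A of H (with the induced Heyting-algebra structure), every finite Heyting algebra B and every injective Heyting-algebra homomorphism j : A → B, there exists an injective Heyting-algebra homomorphism k : B → H such that k(j(a)) = a for all a ∈ A. -/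
/-- Formal Heyting terms in `n` variables. -/
inductive HeytingTerm (n : ℕ) : Type
  | var : Fin n → HeytingTerm n
  | bot : HeytingTerm n
  | top : HeytingTerm n
  | inf : HeytingTerm n → HeytingTerm n → HeytingTerm n
  | sup : HeytingTerm n → HeytingTerm n → HeytingTerm n
  | himp : HeytingTerm n → HeytingTerm n → HeytingTerm n

namespace HeytingTerm

/-- Evaluation of a Heyting term in a Heyting algebra. -/
def eval {n : ℕ} {H : Type*} [HeytingAlgebra H] (v : Fin n → H) : HeytingTerm n → H
  | var i => v i
  | bot => ⊥
  | top => ⊤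
  | inf a b => a.eval v ⊓ b.eval v
  | sup a b => a.eval v ⊔ b.eval v
  | himp a b => a.eval v ⇨ b.eval v

/-- The degree of a Heyting term: the maximal number of nested occurrences of `⇨`. -/
def degree {n : ℕ} : HeytingTerm n → ℕ
  | var _ => 0
  | bot => 0
  | top => 0
  | inf a b => max a.degree b.degree
  | sup a b => max a.degree b.degree
  | himp a b => max a.degree b.degree + 1

end HeytingTerm

/-- `b` is a solution of the system `(t, s₁, …, s_κ)` with parameters `a`. -/
def IsSolution {l m κ : ℕ} {H : Type*} [HeytingAlgebra H]
    (t : HeytingTerm (l + m)) (s : Fin κ → HeytingTerm (l + m))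
    (a : Fin l → H) (b : Fin m → H) : Prop :=
  t.eval (Fin.append a b) = ⊤ ∧ ∀ k, (s k).eval (Fin.append a b) ≠ ⊤

/-- The system `(t, s₁, …, s_κ)` with parameters `a` has a solution in `H`. -/
def HasSolution {l m κ : ℕ} {H : Type*} [HeytingAlgebra H]
    (t : HeytingTerm (l + m)) (s : Fin κ → HeytingTerm (l + m)) (a : Fin l → H) : Prop :=
  ∃ b : Fin m → H, IsSolution t s a b

/-- A Heyting algebra is existentially closed if every system with parameters in `H`
having a solution in an extension of `H` already has a solution in `H`. -/
def IsExtClosed (H : Type*) [HeytingAlgebra H] : Prop :=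
  ∀ (K : Type*) [HeytingAlgebra K] (f : HeytingHom H K), Function.Injective f →
    ∀ {l m κ : ℕ} (t : HeytingTerm (l + m)) (s : Fin κ → HeytingTerm (l + m)) (a : Fin l → H),
      HasSolution t s (fun i => f (a i)) → HasSolution t s a

/-- A Heyting subalgebra: a subset containing `⊥`, `⊤` and closed under `⊓`, `⊔`, `⇨`. -/
structure HeytingSubalgebra (H : Type*) [HeytingAlgebra H] where
  carrier : Set H
  bot_mem : ⊥ ∈ carrier
  top_mem : ⊤ ∈ carrier
  inf_mem : ∀ {a b : H}, a ∈ carrier → b ∈ carrier → a ⊓ b ∈ carrier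
  sup_mem : ∀ {a b : H}, a ∈ carrier → b ∈ carrier → a ⊔ b ∈ carrier
  himp_mem : ∀ {a b : H}, a ∈ carrier → b ∈ carrier → a ⇨ b ∈ carrier

/-- A Heyting algebra is locally finite if every finite subset is contained in a finite
subalgebra. -/
def LocallyFiniteHA (H : Type*) [HeytingAlgebra H] : Prop :=
  ∀ s : Finset H, ∃ S : HeytingSubalgebra H, S.carrier.Finite ∧ ↑s ⊆ S.carrier

namespace HeytingSubalgebra

variable {H : Type*} [HeytingAlgebra H]

instance (S : HeytingSubalgebra H) : Max S.carrier := ⟨fun a b => ⟨a ⊔ b, S.sup_mem a.2 b.2⟩⟩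
instance (S : HeytingSubalgebra H) : Min S.carrier := ⟨fun a b => ⟨a ⊓ b, S.inf_mem a.2 b.2⟩⟩
instance (S : HeytingSubalgebra H) : Top S.carrier := ⟨⟨⊤, S.top_mem⟩⟩
instance (S : HeytingSubalgebra H) : Bot S.carrier := ⟨⟨⊥, S.bot_mem⟩⟩
instance (S : HeytingSubalgebra H) : HImp S.carrier :=
  ⟨fun a b => ⟨a.1 ⇨ b.1, S.himp_mem a.2 b.2⟩⟩
instance (S : HeytingSubalgebra H) : Compl S.carrier :=
  ⟨fun a => ⟨a.1 ⇨ ⊥, S.himp_mem a.2 S.bot_mem⟩⟩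

/-- The induced Heyting algebra structure on a subalgebra. -/
instance (S : HeytingSubalgebra H) : HeytingAlgebra S.carrier :=
  Function.Injective.heytingAlgebra Subtype.val Subtype.coe_injective Iff.rfl Iff.rfl
    (fun _ _ => rfl) (fun _ _ => rfl) rfl rfl (fun a => himp_bot a.1) (fun _ _ => rfl)

end HeytingSubalgebra



/-- Upper sets as a Heyting algebra. -/
def UpSet (X : Type*) [Preorder X] : Type _ := {U : Set X // IsUpperSet U}

namespace UpSet
variable {X : Type*} [Preorder X]

instance : PartialOrder (UpSet X) := Subtype.partialOrder _

lemma le_iff {U V : UpSet X} : U ≤ V ↔ U.1 ⊆ V.1 := Iff.rfl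

instance : HeytingAlgebra (UpSet X) where
  __ := (inferInstance : PartialOrder (UpSet X))
  sup U V := ⟨U.1 ∪ V.1, U.2.union V.2⟩
  inf U V := ⟨U.1 ∩ V.1, U.2.inter V.2⟩
  le_sup_left U V := Set.subset_union_left
  le_sup_right U V := Set.subset_union_right
  sup_le U V W h1 h2 := Set.union_subset h1 h2
  inf_le_left U V := Set.inter_subset_left
  inf_le_right U V := Set.inter_subset_right
  le_inf U V W h1 h2 := Set.subset_inter h1 h2
  top := ⟨Set.univ, isUpperSet_univ⟩
  le_top U := Set.subset_univ _
  bot := ⟨∅, isUpperSet_empty⟩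
  bot_le U := Set.empty_subset _
  himp U V := ⟨{x | ∀ y, x ≤ y → y ∈ U.1 → y ∈ V.1},
    fun x x' hxx' hx y hy hyU => hx y (hxx'.trans hy) hyU⟩
  le_himp_iff W U V := by
    constructor
    · rintro h x ⟨hxW, hxU⟩
      exact h hxW x le_rfl hxU
    · intro h x hxW y hxy hyU
      exact h ⟨W.2 hxy hxW, hyU⟩
  compl U := ⟨{x | ∀ y, x ≤ y → y ∈ U.1 → y ∈ (∅ : Set X)},
    fun x x' hxx' hx y hy hyU => hx y (hxx'.trans hy) hyU⟩
  himp_bot U := rfl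

@[simp] lemma mem_himp_val {U V : UpSet X} {x : X} :
    x ∈ (U ⇨ V).1 ↔ ∀ y, x ≤ y → y ∈ U.1 → y ∈ V.1 := Iff.rfl
@[simp] lemma mem_inf_val {U V : UpSet X} {x : X} : x ∈ (U ⊓ V).1 ↔ x ∈ U.1 ∧ x ∈ V.1 := Iff.rfl
@[simp] lemma mem_sup_val {U V : UpSet X} {x : X} : x ∈ (U ⊔ V).1 ↔ x ∈ U.1 ∨ x ∈ V.1 := Iff.rfl
@[simp] lemma mem_top_val {x : X} : x ∈ (⊤ : UpSet X).1 := trivial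
@[simp] lemma mem_bot_val {x : X} : x ∈ (⊥ : UpSet X).1 ↔ False := Iff.rfl
lemma ext' {U V : UpSet X} (h : U.1 = V.1) : U = V := Subtype.ext h

end UpSet

section PrimeFilters
variable {L : Type*} [HeytingAlgebra L]

/-- A prime filter in a Heyting algebra. -/
structure IsPrimeFilter (F : Set L) : Prop where
  top_mem : ⊤ ∈ F
  bot_not_mem : ⊥ ∉ F
  inf_mem : ∀ ⦃x⦄, x ∈ F → ∀ ⦃y⦄, y ∈ F → x ⊓ y ∈ F
  up_mem : ∀ ⦃x⦄, x ∈ F → ∀ ⦃y⦄, x ≤ y → y ∈ F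
  prime : ∀ ⦃x y⦄, x ⊔ y ∈ F → x ∈ F ∨ y ∈ F

/-- Zorn-style prime filter separation. -/
theorem exists_primeFilter (F0 I : Set L)
    (hFtop : ⊤ ∈ F0) (hFinf : ∀ ⦃x⦄, x ∈ F0 → ∀ ⦃y⦄, y ∈ F0 → x ⊓ y ∈ F0)
    (hFup : ∀ ⦃x⦄, x ∈ F0 → ∀ ⦃y⦄, x ≤ y → y ∈ F0)
    (hIbot : ⊥ ∈ I) (hIdown : ∀ ⦃x⦄, x ∈ I → ∀ ⦃y⦄, y ≤ x → y ∈ I)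
    (hIsup : ∀ ⦃x⦄, x ∈ I → ∀ ⦃y⦄, y ∈ I → x ⊔ y ∈ I)
    (hdisj : ∀ x ∈ F0, x ∉ I) :
    ∃ G, F0 ⊆ G ∧ IsPrimeFilter G ∧ ∀ x ∈ G, x ∉ I := by
  set S : Set (Set L) := {G | F0 ⊆ G ∧ (⊤ ∈ G ∧ (∀ ⦃x⦄, x ∈ G → ∀ ⦃y⦄, y ∈ G → x ⊓ y ∈ G) ∧
      (∀ ⦃x⦄, x ∈ G → ∀ ⦃y⦄, x ≤ y → y ∈ G)) ∧ ∀ x ∈ G, x ∉ I} with hS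
  obtain ⟨M, hF0M, hMS, hMmax⟩ : ∃ M, F0 ⊆ M ∧ M ∈ S ∧ ∀ G ∈ S, M ⊆ G → G = M := by
    have h := zorn_subset_nonempty S ?_ F0 ?_
    · obtain ⟨M, hM1, hM2⟩ := h
      exact ⟨M, hM1, hM2.1, fun G hG hMG => (hM2.2 hG hMG).antisymm hMG⟩
    · rintro c hcS hchain ⟨G0, hG0⟩
      refine ⟨⋃₀ c, ⟨?_, ⟨?_, ?_, ?_⟩, ?_⟩, fun s hs => Set.subset_sUnion_of_mem hs⟩
      · exact (hcS hG0).1.trans (Set.subset_sUnion_of_mem hG0)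
      · exact ⟨G0, hG0, (hcS hG0).2.1.1⟩
      · rintro x ⟨Gx, hGx, hxGx⟩ y ⟨Gy, hGy, hyGy⟩
        rcases hchain.total hGx hGy with h | h
        · exact ⟨Gy, hGy, (hcS hGy).2.1.2.1 (h hxGx) hyGy⟩
        · exact ⟨Gx, hGx, (hcS hGx).2.1.2.1 hxGx (h hyGy)⟩
      · rintro x ⟨Gx, hGx, hxGx⟩ y hxy
        exact ⟨Gx, hGx, (hcS hGx).2.1.2.2 hxGx hxy⟩
      · rintro x ⟨Gx, hGx, hxGx⟩
        exact (hcS hGx).2.2 x hxGx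
    · exact ⟨Set.Subset.rfl, ⟨hFtop, hFinf, hFup⟩, hdisj⟩
  obtain ⟨hMF0, ⟨hMtop, hMinf, hMup⟩, hMI⟩ := hMS
  refine ⟨M, hF0M, ⟨hMtop, fun h => hMI ⊥ h hIbot, hMinf, hMup, ?_⟩, hMI⟩
  intro x y hxy
  by_contra hcon
  push_neg at hcon
  obtain ⟨hx, hy⟩ := hcon
  -- the filter generated by M and x meets I, similarly for y
  have key : ∀ z : L, z ∉ M → z ⊔ ((x:L) ⊔ y) ∈ M → ∃ m ∈ M, ∃ i ∈ I, m ⊓ z ≤ i := by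
    intro z hz _
    by_contra hno
    push_neg at hno
    have : {w | ∃ m ∈ M, m ⊓ z ≤ w} ∈ S := by
      refine ⟨fun w hw => ⟨w, hMF0 hw, inf_le_left⟩, ⟨⟨⊤, hMtop, inf_le_left⟩, ?_, ?_⟩, ?_⟩
      · rintro w1 ⟨m1, hm1, h1⟩ w2 ⟨m2, hm2, h2⟩
        exact ⟨m1 ⊓ m2, hMinf hm1 hm2, by
          calc m1 ⊓ m2 ⊓ z ≤ (m1 ⊓ z) ⊓ (m2 ⊓ z) := by
                refine le_inf (inf_le_inf_right z inf_le_left) (inf_le_inf_right z inf_le_right)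
            _ ≤ w1 ⊓ w2 := inf_le_inf h1 h2⟩
      · rintro w1 ⟨m1, hm1, h1⟩ w2 h12
        exact ⟨m1, hm1, h1.trans h12⟩
      · rintro w ⟨m, hm, hmw⟩ hwI
        exact hno m hm w (hIdown hwI (le_refl w)) hmw
    have hMsub : M ⊆ {w | ∃ m ∈ M, m ⊓ z ≤ w} := fun w hw => ⟨w, hw, inf_le_left⟩
    have heq := hMmax _ this hMsub
    have : z ∈ M := heq ▸ ⟨⊤, hMtop, by simp⟩
    exact hz this
  obtain ⟨m1, hm1, i1, hi1, h1⟩ := key x hx (hMup hxy le_sup_right)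
  obtain ⟨m2, hm2, i2, hi2, h2⟩ := key y hy (hMup hxy le_sup_right)
  have hm : m1 ⊓ m2 ⊓ (x ⊔ y) ∈ M := hMinf (hMinf hm1 hm2) hxy
  have : m1 ⊓ m2 ⊓ (x ⊔ y) ≤ i1 ⊔ i2 := by
    rw [inf_sup_left]
    refine sup_le_sup ?_ ?_
    · exact le_trans (inf_le_inf_right x inf_le_left) h1
    · exact le_trans (inf_le_inf_right y inf_le_right) h2
  exact hMI _ (hMup hm this) (hIsup hi1 hi2)

theorem IsPrimeFilter.preimage {A : Type*} [HeytingAlgebra A] (f : HeytingHom A L)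
    {G : Set L} (hG : IsPrimeFilter G) : IsPrimeFilter (f ⁻¹' G) where
  top_mem := by simp [Set.mem_preimage, hG.top_mem]
  bot_not_mem := by simp [Set.mem_preimage, hG.bot_not_mem]
  inf_mem x hx y hy := by simpa [Set.mem_preimage] using hG.inf_mem hx hy
  up_mem x hx y hxy := hG.up_mem hx (OrderHomClass.mono f hxy)
  prime x y hxy := by
    rcases hG.prime (by simpa using hxy : f x ⊔ f y ∈ G) with h | h
    · exact Or.inl h
    · exact Or.inr h

/-- separation of a point from a non-upper bound -/
theorem primeFilter_sep {x y : L} (hxy : ¬ x ≤ y) :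
    ∃ G, IsPrimeFilter G ∧ x ∈ G ∧ y ∉ G := by
  obtain ⟨G, hsub, hG, hdis⟩ := exists_primeFilter {z | x ≤ z} {z | z ≤ y}
    le_top (fun a ha b hb => le_inf ha hb) (fun a ha b hab => ha.trans hab)
    bot_le (fun a ha b hba => hba.trans ha) (fun a ha b hb => sup_le ha hb)
    (fun z hz hzy => hxy (le_trans hz hzy))
  exact ⟨G, hG, hsub le_rfl, fun hyG => hdis y hyG le_rfl⟩

/-- himp separation: if `x ⇨ y ∉ F`, find a prime extension containing `x` but not `y`. -/
theorem primeFilter_himp {F : Set L} (hF : IsPrimeFilter F) {x y : L} (h : x ⇨ y ∉ F) :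
    ∃ G, IsPrimeFilter G ∧ F ⊆ G ∧ x ∈ G ∧ y ∉ G := by
  obtain ⟨G, hsub, hG, hdis⟩ := exists_primeFilter {z | ∃ m ∈ F, m ⊓ x ≤ z} {z | z ≤ y}
    ⟨⊤, hF.top_mem, le_top⟩
    (by rintro a ⟨m1, hm1, h1⟩ b ⟨m2, hm2, h2⟩
        exact ⟨m1 ⊓ m2, hF.inf_mem hm1 hm2, by
          calc m1 ⊓ m2 ⊓ x ≤ (m1 ⊓ x) ⊓ (m2 ⊓ x) :=
                le_inf (inf_le_inf_right x inf_le_left) (inf_le_inf_right x inf_le_right)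
            _ ≤ a ⊓ b := inf_le_inf h1 h2⟩)
    (by rintro a ⟨m, hm, hma⟩ b hab; exact ⟨m, hm, hma.trans hab⟩)
    bot_le (fun a ha b hba => hba.trans ha) (fun a ha b hb => sup_le ha hb)
    (by rintro z ⟨m, hm, hmz⟩ hzy
        exact h (hF.up_mem hm (le_himp_iff.2 (hmz.trans hzy))))
  refine ⟨G, hG, fun m hm => hsub ⟨m, hm, inf_le_left⟩, hsub ⟨⊤, hF.top_mem, by simp⟩,
    fun hyG => hdis y hyG le_rfl⟩

/-- The key lifting lemma: prime filters can be lifted along Heyting embeddings,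
extending a given filter. -/
theorem primeFilter_lift {A : Type*} [HeytingAlgebra A] (f : HeytingHom A L)
    {F : Set L} (hFtop : ⊤ ∈ F) (hFinf : ∀ ⦃x⦄, x ∈ F → ∀ ⦃y⦄, y ∈ F → x ⊓ y ∈ F)
    (hFup : ∀ ⦃x⦄, x ∈ F → ∀ ⦃y⦄, x ≤ y → y ∈ F)
    {p : Set A} (hp : IsPrimeFilter p) (hsub : f ⁻¹' F ⊆ p) :
    ∃ G, IsPrimeFilter G ∧ F ⊆ G ∧ f ⁻¹' G = p := by
  obtain ⟨G, hsubG, hG, hdis⟩ := exists_primeFilter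
      {z | ∃ m ∈ F, ∃ a ∈ p, m ⊓ f a ≤ z} {z | ∃ b, b ∉ p ∧ z ≤ f b}
    ⟨⊤, hFtop, ⊤, hp.top_mem, le_top⟩
    (by rintro z1 ⟨m1, hm1, a1, ha1, h1⟩ z2 ⟨m2, hm2, a2, ha2, h2⟩
        refine ⟨m1 ⊓ m2, hFinf hm1 hm2, a1 ⊓ a2, hp.inf_mem ha1 ha2, ?_⟩
        rw [map_inf]
        calc m1 ⊓ m2 ⊓ (f a1 ⊓ f a2) ≤ (m1 ⊓ f a1) ⊓ (m2 ⊓ f a2) := by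
              refine le_inf (inf_le_inf inf_le_left inf_le_left)
                (inf_le_inf inf_le_right inf_le_right)
          _ ≤ z1 ⊓ z2 := inf_le_inf h1 h2)
    (by rintro z ⟨m, hm, a, ha, hz⟩ w hzw; exact ⟨m, hm, a, ha, hz.trans hzw⟩)
    ⟨⊥, hp.bot_not_mem, by simp⟩
    (by rintro z ⟨b, hb, hzb⟩ w hwz; exact ⟨b, hb, hwz.trans hzb⟩)
    (by rintro z1 ⟨b1, hb1, h1⟩ z2 ⟨b2, hb2, h2⟩
        refine ⟨b1 ⊔ b2, fun hmem => ?_, by rw [map_sup]; exact sup_le_sup h1 h2⟩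
        rcases hp.prime hmem with h | h
        · exact hb1 h
        · exact hb2 h)
    (by rintro z ⟨m, hm, a, ha, hz⟩ ⟨b, hb, hzb⟩
        have : m ≤ f a ⇨ f b := le_himp_iff.2 (by
          calc m ⊓ f a ≤ z := hz
            _ ≤ f b := hzb)
        rw [← map_himp] at this
        have : a ⇨ b ∈ p := hsub (hFup hm this)
        have : b ∈ p := hp.up_mem (hp.inf_mem ha this) (by simp [inf_himp_le])
        exact hb this)
  refine ⟨G, hG, fun m hm => hsubG ⟨m, hm, ⊤, hp.top_mem, by simp⟩, ?_⟩
  ext a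
  constructor
  · intro haG
    by_contra hap
    exact hdis (f a) haG ⟨a, hap, le_rfl⟩
  · intro hap
    exact hsubG ⟨⊤, hFtop, a, hap, by simp⟩

end PrimeFilters
section Stone
variable (L : Type*) [HeytingAlgebra L]

/-- The space of prime filters, ordered by REVERSE inclusion is not needed;
we use inclusion and upper sets. -/
def PrimeSpec : Type _ := {F : Set L // IsPrimeFilter F}

instance : PartialOrder (PrimeSpec L) := Subtype.partialOrder _

lemma PrimeSpec.le_iff {F G : PrimeSpec L} : F ≤ G ↔ F.1 ⊆ G.1 := Iff.rfl

variable {L}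

/-- The Stone map into upper sets of prime filters. -/
noncomputable def stoneHom : HeytingHom L (UpSet (PrimeSpec L)) where
  toFun x := ⟨{F | x ∈ F.1}, fun F G hFG hx => hFG hx⟩
  map_sup' x y := UpSet.ext' <| by
    ext F
    constructor
    · intro h; exact F.2.prime h
    · rintro (h | h)
      · exact F.2.up_mem h le_sup_left
      · exact F.2.up_mem h le_sup_right
  map_inf' x y := UpSet.ext' <| by
    ext F
    constructor
    · intro h
      exact ⟨F.2.up_mem h inf_le_left, F.2.up_mem h inf_le_right⟩
    · rintro ⟨h1, h2⟩; exact F.2.inf_mem h1 h2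
  map_bot' := UpSet.ext' <| by
    ext F
    simp only [UpSet.mem_bot_val, iff_false]
    exact F.2.bot_not_mem
  map_himp' x y := UpSet.ext' <| by
    ext F
    constructor
    · intro h G hFG hxG
      exact G.2.up_mem (G.2.inf_mem hxG (hFG h)) (by simp [inf_himp_le])
    · intro h
      by_contra hne
      obtain ⟨G, hG, hFG, hxG, hyG⟩ := primeFilter_himp F.2 hne
      exact hyG (h ⟨G, hG⟩ hFG hxG)

lemma stoneHom_injective : Function.Injective (stoneHom (L := L)) := by
  intro x y hxy
  have hsub : ∀ {a b : L}, (stoneHom a : UpSet (PrimeSpec L)) = stoneHom b → a ≤ b := by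
    intro a b hab
    by_contra hba
    obtain ⟨G, hG, haG, hbG⟩ := primeFilter_sep hba
    have : (⟨G, hG⟩ : PrimeSpec L) ∈ (stoneHom a).1 := haG
    rw [hab] at this
    exact hbG this
  exact le_antisymm (hsub hxy) (hsub hxy.symm)

end Stone

section Pullback
variable {X Y : Type*} [PartialOrder X] [PartialOrder Y]

/-- Pulling back upper sets along a surjective p-morphism gives an injective Heyting
homomorphism. -/
def pmorphHom (φ : X → Y) (hmono : Monotone φ)
    (hback : ∀ x y', φ x ≤ y' → ∃ x', x ≤ x' ∧ φ x' = y') :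
    HeytingHom (UpSet Y) (UpSet X) where
  toFun U := ⟨φ ⁻¹' U.1, fun a b hab ha => U.2 (hmono hab) ha⟩
  map_sup' U V := rfl
  map_inf' U V := rfl
  map_bot' := rfl
  map_himp' U V := UpSet.ext' <| by
    ext x
    constructor
    · intro h x' hxx' hx'U
      exact h (φ x') (hmono hxx') hx'U
    · intro h y hφy hyU
      obtain ⟨x', hxx', rfl⟩ := hback x y hφy
      exact h x' hxx' hyU

lemma pmorphHom_injective (φ : X → Y) (hmono : Monotone φ)
    (hback : ∀ x y', φ x ≤ y' → ∃ x', x ≤ x' ∧ φ x' = y') (hsurj : Function.Surjective φ) :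
    Function.Injective (pmorphHom φ hmono hback) := by
  intro U V hUV
  apply UpSet.ext'
  have : φ ⁻¹' U.1 = φ ⁻¹' V.1 := congrArg Subtype.val hUV
  ext y
  obtain ⟨x, rfl⟩ := hsurj y
  exact Set.ext_iff.1 this x

end Pullback
section Amalgam
universe uS uH uB
variable {S : Type uS} {H : Type uH} {B : Type uB}
variable [HeytingAlgebra S] [HeytingAlgebra H] [HeytingAlgebra B]

/-- Data of an amalgam of `H` and `B` over `S`. -/
structure AmalgamData (ι : HeytingHom S H) (j : HeytingHom S B) where
  K : Type (max uH uB)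
  [instK : HeytingAlgebra K]
  g : HeytingHom H K
  h : HeytingHom B K
  hg : Function.Injective g
  hh : Function.Injective h
  comm : ∀ s, g (ι s) = h (j s)

attribute [instance] AmalgamData.instK

variable (ι : HeytingHom S H) (j : HeytingHom S B)

/-- The dual amalgam space. -/
def AmalgSpace : Type (max uH uB) :=
  {z : PrimeSpec H × PrimeSpec B // ι ⁻¹' z.1.1 = j ⁻¹' z.2.1}

instance : PartialOrder (AmalgSpace ι j) := Subtype.partialOrder _

lemma amalg_le_iff {z w : AmalgSpace ι j} : z ≤ w ↔ z.1.1 ≤ w.1.1 ∧ z.1.2 ≤ w.1.2 :=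
  Prod.le_def

variable {ι j}

section
variable (hι : Function.Injective ι) (hj : Function.Injective j)
include hι hj


omit hι in
lemma amalg_surj1 : ∀ F : PrimeSpec H, ∃ z : AmalgSpace ι j, z.1.1 = F := by
  intro F
  have hp : IsPrimeFilter (ι ⁻¹' F.1) := F.2.preimage ι
  obtain ⟨G, hG, -, hGeq⟩ := primeFilter_lift j (F := {(⊤ : B)}) rfl
    (by rintro x rfl y rfl; simp) (by rintro x rfl y hy; exact top_unique hy) hp
    (by rintro a ha
        have : j a = j ⊤ := by simpa using ha
        rw [hj this]
        exact hp.top_mem)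
  exact ⟨⟨(F, ⟨G, hG⟩), hGeq.symm⟩, rfl⟩

omit hj in
lemma amalg_surj2 : ∀ G : PrimeSpec B, ∃ z : AmalgSpace ι j, z.1.2 = G := by
  intro G
  have hp : IsPrimeFilter (j ⁻¹' G.1) := G.2.preimage j
  obtain ⟨F, hF, -, hFeq⟩ := primeFilter_lift ι (F := {(⊤ : H)}) rfl
    (by rintro x rfl y rfl; simp) (by rintro x rfl y hy; exact top_unique hy) hp
    (by rintro a ha
        have : ι a = ι ⊤ := by simpa using ha
        rw [hι this]
        exact hp.top_mem)
  exact ⟨⟨(⟨F, hF⟩, G), hFeq⟩, rfl⟩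

omit hι hj in
lemma amalg_back1 : ∀ (z : AmalgSpace ι j) (F' : PrimeSpec H), z.1.1 ≤ F' →
    ∃ z', z ≤ z' ∧ z'.1.1 = F' := by
  rintro ⟨⟨F, G⟩, hz⟩ F' hFF'
  have hp : IsPrimeFilter (ι ⁻¹' F'.1) := F'.2.preimage ι
  obtain ⟨G', hG', hGG', hGeq⟩ := primeFilter_lift j (F := G.1) G.2.top_mem
    (fun x hx y hy => G.2.inf_mem hx hy) (fun x hx y hxy => G.2.up_mem hx hxy) hp
    (by rw [← hz]; exact fun a ha => hFF' ha)
  exact ⟨⟨(F', ⟨G', hG'⟩), hGeq.symm⟩, (amalg_le_iff ι j).2 ⟨hFF', hGG'⟩, rfl⟩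

omit hι hj in
lemma amalg_back2 : ∀ (z : AmalgSpace ι j) (G' : PrimeSpec B), z.1.2 ≤ G' →
    ∃ z', z ≤ z' ∧ z'.1.2 = G' := by
  rintro ⟨⟨F, G⟩, hz⟩ G' hGG'
  have hp : IsPrimeFilter (j ⁻¹' G'.1) := G'.2.preimage j
  obtain ⟨F', hF', hFF', hFeq⟩ := primeFilter_lift ι (F := F.1) F.2.top_mem
    (fun x hx y hy => F.2.inf_mem hx hy) (fun x hx y hxy => F.2.up_mem hx hxy) hp
    (by rw [hz]; exact fun a ha => hGG' ha)
  exact ⟨⟨(⟨F', hF'⟩, G'), hFeq⟩, (amalg_le_iff ι j).2 ⟨hFF', hGG'⟩, rfl⟩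

/-- Heyting algebras have the amalgamation property. -/
noncomputable def amalgamData (hι : Function.Injective ι) (hj : Function.Injective j) :
    AmalgamData ι j :=
  let φ1 : AmalgSpace ι j → PrimeSpec H := fun z => z.1.1
  let φ2 : AmalgSpace ι j → PrimeSpec B := fun z => z.1.2
  have hm1 : Monotone φ1 := fun z w h => ((amalg_le_iff ι j).1 h).1
  have hm2 : Monotone φ2 := fun z w h => ((amalg_le_iff ι j).1 h).2
  { K := UpSet (AmalgSpace ι j)
    g := (pmorphHom φ1 hm1 amalg_back1).comp stoneHom
    h := (pmorphHom φ2 hm2 amalg_back2).comp stoneHom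
    hg := by
      intro x y hxy
      exact stoneHom_injective (pmorphHom_injective φ1 hm1 amalg_back1 (amalg_surj1 hj) hxy)
    hh := by
      intro x y hxy
      exact stoneHom_injective (pmorphHom_injective φ2 hm2 amalg_back2 (amalg_surj2 hι) hxy)
    comm := by
      intro s
      apply UpSet.ext'
      ext z
      exact Set.ext_iff.1 z.2 s }

end
end Amalgam
section Copy
universe ua uv

/-- Transporting a Heyting algebra structure along an equivalence. -/
noncomputable def Equiv.heytingAlgebraCopy {α : Type ua} {β : Type uv} [HeytingAlgebra α]
    (e : β ≃ α) : HeytingAlgebra β :=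
  letI : Max β := ⟨fun a b => e.symm (e a ⊔ e b)⟩
  letI : Min β := ⟨fun a b => e.symm (e a ⊓ e b)⟩
  letI : Top β := ⟨e.symm ⊤⟩
  letI : Bot β := ⟨e.symm ⊥⟩
  letI : Compl β := ⟨fun a => e.symm (e a)ᶜ⟩
  letI : HImp β := ⟨fun a b => e.symm (e a ⇨ e b)⟩
  letI : LE β := ⟨fun a b => e a ≤ e b⟩
  letI : LT β := ⟨fun a b => e a < e b⟩
  Function.Injective.heytingAlgebra e e.injective Iff.rfl Iff.rfl (fun a b => e.apply_symm_apply _)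
    (fun a b => e.apply_symm_apply _) (e.apply_symm_apply _) (e.apply_symm_apply _)
    (fun a => e.apply_symm_apply _) (fun a b => e.apply_symm_apply _)

/-- A copy of a Heyting algebra in another universe. -/
structure CopyData (α : Type ua) [HeytingAlgebra α] (v : outParam Unit) where
  β : Type uv
  [instβ : HeytingAlgebra β]
  toA : HeytingHom β α
  ofA : HeytingHom α β
  toA_ofA : ∀ a, toA (ofA a) = a
  ofA_toA : ∀ b, ofA (toA b) = b

attribute [instance] CopyData.instβ

/-- If `α` injects into some type `W` of universe `uv`, there is a copy of `α` in
universe `uv`. -/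
noncomputable def mkCopy (α : Type ua) [HeytingAlgebra α] {W : Type uv} (emb : α → W)
    (he : Function.Injective emb) : CopyData.{ua, uv} α () :=
  let e : Set.range emb ≃ α := (Equiv.ofInjective emb he).symm
  letI : HeytingAlgebra (Set.range emb) := e.heytingAlgebraCopy
  { β := Set.range emb
    toA := { toFun := e
             map_sup' := fun a b => e.apply_symm_apply _
             map_inf' := fun a b => e.apply_symm_apply _
             map_bot' := e.apply_symm_apply _
             map_himp' := fun a b => e.apply_symm_apply _ }
    ofA := { toFun := e.symm
             map_sup' := fun a b => by
               show e.symm (a ⊔ b) = e.symm (e (e.symm a) ⊔ e (e.symm b))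
               rw [e.apply_symm_apply, e.apply_symm_apply]
             map_inf' := fun a b => by
               show e.symm (a ⊓ b) = e.symm (e (e.symm a) ⊓ e (e.symm b))
               rw [e.apply_symm_apply, e.apply_symm_apply]
             map_bot' := rfl
             map_himp' := fun a b => by
               show e.symm (a ⇨ b) = e.symm (e (e.symm a) ⇨ e (e.symm b))
               rw [e.apply_symm_apply, e.apply_symm_apply] }
    toA_ofA := fun a => e.apply_symm_apply a
    ofA_toA := fun b => e.symm_apply_apply b }

lemma CopyData.toA_injective {α : Type ua} [HeytingAlgebra α] (c : CopyData.{ua,uv} α ()) :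
    Function.Injective c.toA :=
  Function.LeftInverse.injective c.ofA_toA

lemma CopyData.ofA_injective {α : Type ua} [HeytingAlgebra α] (c : CopyData.{ua,uv} α ()) :
    Function.Injective c.ofA :=
  Function.LeftInverse.injective c.toA_ofA

end Copy

section EvalLemmas
variable {H K : Type*} [HeytingAlgebra H] [HeytingAlgebra K]

lemma HeytingTerm.eval_hom (f : HeytingHom H K) {n : ℕ} (v : Fin n → H) :
    ∀ u : HeytingTerm n, u.eval (fun i => f (v i)) = f (u.eval v)
  | .var i => rfl
  | .bot => (map_bot f).symm
  | .top => (map_top f).symm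
  | .inf a b => by
      simp only [HeytingTerm.eval, eval_hom f v a, eval_hom f v b, map_inf]
  | .sup a b => by
      simp only [HeytingTerm.eval, eval_hom f v a, eval_hom f v b, map_sup]
  | .himp a b => by
      simp only [HeytingTerm.eval, eval_hom f v a, eval_hom f v b, map_himp]

lemma biimp_eval_eq_top_iff {x y : H} : (x ⇨ y) ⊓ (y ⇨ x) = ⊤ ↔ x = y := by
  rw [inf_eq_top_iff, himp_eq_top_iff, himp_eq_top_iff]
  constructor
  · rintro ⟨h1, h2⟩; exact le_antisymm h1 h2
  · rintro rfl; exact ⟨le_rfl, le_rfl⟩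

/-- conjunction of a list of terms -/
def conjList {n : ℕ} : List (HeytingTerm n) → HeytingTerm n
  | [] => .top
  | u :: L => .inf u (conjList L)

lemma conjList_eval_eq_top_iff {n : ℕ} (v : Fin n → H) :
    ∀ L : List (HeytingTerm n), (conjList L).eval v = ⊤ ↔ ∀ u ∈ L, u.eval v = ⊤
  | [] => by simp [conjList, HeytingTerm.eval]
  | u :: L => by
      simp only [conjList, HeytingTerm.eval, inf_eq_top_iff, List.mem_cons,
        conjList_eval_eq_top_iff v L]
      constructor
      · rintro ⟨h1, h2⟩ w (rfl | hw)
        · exact h1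
        · exact h2 w hw
      · intro h
        exact ⟨h u (Or.inl rfl), fun w hw => h w (Or.inr hw)⟩

/-- the biimplication term -/
def biimpT {n : ℕ} (u v : HeytingTerm n) : HeytingTerm n := .inf (.himp u v) (.himp v u)

lemma biimpT_eval_eq_top_iff {n : ℕ} (w : Fin n → H) (u v : HeytingTerm n) :
    (biimpT u v).eval w = ⊤ ↔ u.eval w = v.eval w := by
  simp only [biimpT, HeytingTerm.eval]
  exact biimp_eval_eq_top_iff

end EvalLemmas

section EvalSimp
variable {H : Type*} [HeytingAlgebra H] {n : ℕ}
@[simp] lemma HeytingTerm.eval_var (v : Fin n → H) (i : Fin n) :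
    (HeytingTerm.var i).eval v = v i := rfl
@[simp] lemma HeytingTerm.eval_inf (v : Fin n → H) (a b : HeytingTerm n) :
    (HeytingTerm.inf a b).eval v = a.eval v ⊓ b.eval v := rfl
@[simp] lemma HeytingTerm.eval_sup (v : Fin n → H) (a b : HeytingTerm n) :
    (HeytingTerm.sup a b).eval v = a.eval v ⊔ b.eval v := rfl
@[simp] lemma HeytingTerm.eval_himp (v : Fin n → H) (a b : HeytingTerm n) :
    (HeytingTerm.himp a b).eval v = a.eval v ⇨ b.eval v := rfl
@[simp] lemma HeytingTerm.eval_bot (v : Fin n → H) :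
    (HeytingTerm.bot : HeytingTerm n).eval v = ⊥ := rfl
@[simp] lemma HeytingTerm.eval_top (v : Fin n → H) :
    (HeytingTerm.top : HeytingTerm n).eval v = ⊤ := rfl
end EvalSimp
section Filtration
variable {K : Type*} [HeytingAlgebra K]

/-- The sublattice (with bounds) generated by a set: sups of infs. -/
def LatClos (G : Set K) : Set K :=
  {x | ∃ A : Finset K, (∀ a ∈ A, ∃ B : Finset K, ↑B ⊆ G ∧ a = B.inf id) ∧ x = A.sup id}

lemma latClos_mono {G G' : Set K} (h : G ⊆ G') : LatClos G ⊆ LatClos G' := by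
  rintro x ⟨A, hA, rfl⟩
  exact ⟨A, fun a ha => (hA a ha).imp (fun B hB => ⟨hB.1.trans h, hB.2⟩), rfl⟩

lemma subset_latClos (G : Set K) : G ⊆ LatClos G := by
  intro g hg
  refine ⟨{g}, ?_, by simp⟩
  intro a ha
  rw [Finset.mem_singleton] at ha
  subst ha
  exact ⟨{a}, by simpa using hg, by simp⟩

lemma bot_mem_latClos (G : Set K) : ⊥ ∈ LatClos G := ⟨∅, by simp, by simp⟩

lemma top_mem_latClos (G : Set K) : ⊤ ∈ LatClos G := by
  refine ⟨{⊤}, ?_, by simp⟩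
  intro a ha
  rw [Finset.mem_singleton] at ha
  exact ⟨∅, by simp, by simp [ha]⟩

lemma sup_mem_latClos {G : Set K} {x y : K} (hx : x ∈ LatClos G) (hy : y ∈ LatClos G) :
    x ⊔ y ∈ LatClos G := by
  classical
  obtain ⟨A, hA, rfl⟩ := hx
  obtain ⟨A', hA', rfl⟩ := hy
  refine ⟨A ∪ A', ?_, by rw [Finset.sup_union]⟩
  intro a ha
  rcases Finset.mem_union.1 ha with h | h
  · exact hA a h
  · exact hA' a h

lemma inf_mem_latClos {G : Set K} {x y : K} (hx : x ∈ LatClos G) (hy : y ∈ LatClos G) :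
    x ⊓ y ∈ LatClos G := by
  classical
  obtain ⟨A, hA, rfl⟩ := hx
  obtain ⟨A', hA', rfl⟩ := hy
  refine ⟨(A ×ˢ A').image (fun p => p.1 ⊓ p.2), ?_, ?_⟩
  · intro a ha
    obtain ⟨⟨a1, a2⟩, hmem, rfl⟩ := Finset.mem_image.1 ha
    obtain ⟨h1, h2⟩ := Finset.mem_product.1 hmem
    obtain ⟨B1, hB1, rfl⟩ := hA a1 h1
    obtain ⟨B2, hB2, rfl⟩ := hA' a2 h2
    exact ⟨B1 ∪ B2, by rw [Finset.coe_union]; exact Set.union_subset hB1 hB2,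
      by rw [Finset.inf_union]⟩
  · apply le_antisymm
    · rw [Finset.sup_inf_distrib_right]
      refine Finset.sup_le fun a ha => ?_
      rw [Finset.sup_inf_distrib_left]
      refine Finset.sup_le fun a' ha' => ?_
      exact Finset.le_sup (f := id) (Finset.mem_image.2 ⟨(a, a'), Finset.mem_product.2 ⟨ha, ha'⟩, rfl⟩)
    · refine Finset.sup_le fun c hc => ?_
      obtain ⟨⟨a1, a2⟩, hmem, rfl⟩ := Finset.mem_image.1 hc
      obtain ⟨h1, h2⟩ := Finset.mem_product.1 hmem
      exact le_inf (le_trans inf_le_left (Finset.le_sup (f := id) h1))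
        (le_trans inf_le_right (Finset.le_sup (f := id) h2))

lemma latClos_finite {G : Set K} (hG : G.Finite) : (LatClos G).Finite := by
  classical
  refine Set.Finite.subset (Set.finite_coe_iff.1 ?_)
    (?_ : LatClos G ⊆ ↑(((hG.toFinset.powerset).image (fun B => B.inf id)).powerset.image
      (fun A => A.sup id)))
  · exact Set.finite_coe_iff.2 (Finset.finite_toSet _)
  · rintro x ⟨A, hA, rfl⟩
    refine Finset.mem_coe.2 (Finset.mem_image.2 ⟨A, Finset.mem_powerset.2 ?_, rfl⟩)
    intro a ha
    obtain ⟨B, hB, rfl⟩ := hA a ha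
    exact Finset.mem_image.2 ⟨B, Finset.mem_powerset.2 (by
      rw [← Finset.coe_subset, Set.Finite.coe_toFinset]; exact hB), rfl⟩

variable (G₀ : Set K)

/-- Degree filtration: level `d` contains values of all terms of degree at most `d`. -/
def FiltLevel : ℕ → Set K
  | 0 => LatClos G₀
  | d+1 => LatClos (G₀ ∪ Set.image2 (· ⇨ ·) (FiltLevel d) (FiltLevel d))

variable {G₀}

lemma base_subset_filtLevel : ∀ d, G₀ ⊆ FiltLevel G₀ d
  | 0 => subset_latClos _
  | d+1 => Set.subset_union_left.trans (subset_latClos _)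

lemma filtLevel_succ_mono : ∀ d, FiltLevel G₀ d ⊆ FiltLevel G₀ (d+1)
  | 0 => latClos_mono Set.subset_union_left
  | d+1 => latClos_mono (Set.union_subset_union_right _
      (Set.image2_subset (filtLevel_succ_mono d) (filtLevel_succ_mono d)))

lemma filtLevel_mono {d e : ℕ} (h : d ≤ e) : FiltLevel G₀ d ⊆ FiltLevel G₀ e := by
  induction e with
  | zero => rw [Nat.le_zero.1 h]
  | succ e ih =>
      rcases Nat.lt_or_ge d (e+1) with h' | h'
      · exact (ih (Nat.lt_succ_iff.1 h')).trans (filtLevel_succ_mono e)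
      · rw [le_antisymm h h']

lemma bot_mem_filtLevel (d : ℕ) : ⊥ ∈ FiltLevel G₀ d := by
  cases d <;> exact bot_mem_latClos _

lemma top_mem_filtLevel (d : ℕ) : ⊤ ∈ FiltLevel G₀ d := by
  cases d <;> exact top_mem_latClos _

lemma sup_mem_filtLevel {d : ℕ} {x y : K} (hx : x ∈ FiltLevel G₀ d) (hy : y ∈ FiltLevel G₀ d) :
    x ⊔ y ∈ FiltLevel G₀ d := by
  cases d <;> exact sup_mem_latClos hx hy

lemma inf_mem_filtLevel {d : ℕ} {x y : K} (hx : x ∈ FiltLevel G₀ d) (hy : y ∈ FiltLevel G₀ d) :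
    x ⊓ y ∈ FiltLevel G₀ d := by
  cases d <;> exact inf_mem_latClos hx hy

lemma himp_mem_filtLevel {d : ℕ} {x y : K} (hx : x ∈ FiltLevel G₀ d) (hy : y ∈ FiltLevel G₀ d) :
    x ⇨ y ∈ FiltLevel G₀ (d+1) :=
  subset_latClos _ (Set.mem_union_right _ (Set.mem_image2_of_mem hx hy))

lemma filtLevel_finite (hG₀ : G₀.Finite) : ∀ d, (FiltLevel G₀ d).Finite
  | 0 => latClos_finite hG₀
  | d+1 => latClos_finite (hG₀.union (Set.Finite.image2 _ (filtLevel_finite hG₀ d)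
      (filtLevel_finite hG₀ d)))

end Filtration

/-- A finite sublattice of a Heyting algebra, which carries its own Heyting structure. -/
structure FinSublat (K : Type*) [HeytingAlgebra K] where
  D : Set K
  fin : D.Finite
  bot_mem : ⊥ ∈ D
  top_mem : ⊤ ∈ D
  inf_mem : ∀ ⦃x⦄, x ∈ D → ∀ ⦃y⦄, y ∈ D → x ⊓ y ∈ D
  sup_mem : ∀ ⦃x⦄, x ∈ D → ∀ ⦃y⦄, y ∈ D → x ⊔ y ∈ D

namespace FinSublat
variable {K : Type*} [HeytingAlgebra K] (P : FinSublat K)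

lemma finsetSup_mem (A : Finset K) (h : ∀ a ∈ A, a ∈ P.D) : A.sup id ∈ P.D :=
  Finset.sup_induction P.bot_mem (fun a ha b hb => P.sup_mem ha hb) h

instance : Finite ↥P.D := P.fin.to_subtype

noncomputable instance instPO : PartialOrder ↥P.D := Subtype.partialOrder _

open Classical in
/-- The Heyting implication internal to a finite sublattice. -/
noncomputable def himpD (x y : ↥P.D) : ↥P.D :=
  ⟨(P.fin.toFinset.filter (fun z => z ⊓ x.1 ≤ y.1)).sup id,
    P.finsetSup_mem _ (fun a ha => P.fin.mem_toFinset.1 (Finset.mem_filter.1 ha).1)⟩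

open Classical in
noncomputable instance instHA : HeytingAlgebra ↥P.D where
  __ := P.instPO
  sup x y := ⟨x.1 ⊔ y.1, P.sup_mem x.2 y.2⟩
  inf x y := ⟨x.1 ⊓ y.1, P.inf_mem x.2 y.2⟩
  le_sup_left x y := le_sup_left (α := K)
  le_sup_right x y := le_sup_right (α := K)
  sup_le x y z h1 h2 := sup_le (α := K) h1 h2
  inf_le_left x y := inf_le_left (α := K)
  inf_le_right x y := inf_le_right (α := K)
  le_inf x y z h1 h2 := le_inf (α := K) h1 h2
  top := ⟨⊤, P.top_mem⟩
  le_top x := le_top (α := K)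
  bot := ⟨⊥, P.bot_mem⟩
  bot_le x := bot_le (α := K)
  himp := P.himpD
  le_himp_iff a b c := by
    constructor
    · intro h
      have h' : a.1 ≤ (P.fin.toFinset.filter (fun z => z ⊓ b.1 ≤ c.1)).sup id := h
      show a.1 ⊓ b.1 ≤ c.1
      calc a.1 ⊓ b.1 ≤ (P.fin.toFinset.filter (fun z => z ⊓ b.1 ≤ c.1)).sup id ⊓ b.1 :=
            inf_le_inf_right _ h'
        _ ≤ c.1 := by
            rw [Finset.sup_inf_distrib_right]
            refine Finset.sup_le fun z hz => ?_
            exact (Finset.mem_filter.1 hz).2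
    · intro h
      show a.1 ≤ (P.fin.toFinset.filter (fun z => z ⊓ b.1 ≤ c.1)).sup id
      exact Finset.le_sup (f := id) (Finset.mem_filter.2 ⟨P.fin.mem_toFinset.2 a.2, h⟩)
  compl x := P.himpD x ⟨⊥, P.bot_mem⟩
  himp_bot x := rfl

@[simp] lemma inf_val (x y : ↥P.D) : (x ⊓ y).1 = x.1 ⊓ y.1 := rfl
@[simp] lemma sup_val (x y : ↥P.D) : (x ⊔ y).1 = x.1 ⊔ y.1 := rfl
@[simp] lemma top_val : (⊤ : ↥P.D).1 = ⊤ := rfl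
@[simp] lemma bot_val : (⊥ : ↥P.D).1 = ⊥ := rfl

lemma himp_val {x y : ↥P.D} (h : x.1 ⇨ y.1 ∈ P.D) : (x ⇨ y).1 = x.1 ⇨ y.1 := by
  apply le_antisymm
  · rw [le_himp_iff]
    have h1 : (x ⇨ y) ⊓ x ≤ y := himp_inf_le
    exact h1
  · have hz : (⟨x.1 ⇨ y.1, h⟩ : ↥P.D) ⊓ x ≤ y := by
      have h2 : (x.1 ⇨ y.1) ⊓ x.1 ≤ y.1 := himp_inf_le
      exact h2
    have := le_himp_iff.1 (le_himp_iff.2 hz)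
    exact le_himp_iff.2 hz

end FinSublat
section MPR
variable {K : Type*} [HeytingAlgebra K]

/-- The finite sublattice obtained from the degree filtration. -/
noncomputable def filtSublat {G₀ : Set K} (hG₀ : G₀.Finite) (dmax : ℕ) : FinSublat K where
  D := FiltLevel G₀ dmax
  fin := filtLevel_finite hG₀ dmax
  bot_mem := bot_mem_filtLevel dmax
  top_mem := top_mem_filtLevel dmax
  inf_mem := fun _ hx _ hy => inf_mem_filtLevel hx hy
  sup_mem := fun _ hx _ hy => sup_mem_filtLevel hx hy

lemma eval_agree {G₀ : Set K} (hG₀ : G₀.Finite) (dmax : ℕ) {n : ℕ}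
    (v : Fin n → ↥(filtSublat hG₀ dmax).D) (hv : ∀ i, (v i).1 ∈ G₀) :
    ∀ (u : HeytingTerm n) (e : ℕ), u.degree ≤ e → e ≤ dmax →
      (u.eval v).1 = u.eval (fun i => (v i).1) ∧
        u.eval (fun i => (v i).1) ∈ FiltLevel G₀ e := by
  intro u
  induction u with
  | var i =>
      intro e _ _
      exact ⟨rfl, base_subset_filtLevel e (hv i)⟩
  | bot => intro e _ _; exact ⟨rfl, bot_mem_filtLevel e⟩
  | top => intro e _ _; exact ⟨rfl, top_mem_filtLevel e⟩
  | inf a b iha ihb =>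
      intro e hdeg he
      rw [HeytingTerm.degree, max_le_iff] at hdeg
      obtain ⟨ha1, ha2⟩ := iha e hdeg.1 he
      obtain ⟨hb1, hb2⟩ := ihb e hdeg.2 he
      refine ⟨?_, inf_mem_filtLevel ha2 hb2⟩
      show (a.eval v ⊓ b.eval v).1 = _
      rw [FinSublat.inf_val, ha1, hb1]
      rfl
  | sup a b iha ihb =>
      intro e hdeg he
      rw [HeytingTerm.degree, max_le_iff] at hdeg
      obtain ⟨ha1, ha2⟩ := iha e hdeg.1 he
      obtain ⟨hb1, hb2⟩ := ihb e hdeg.2 he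
      refine ⟨?_, sup_mem_filtLevel ha2 hb2⟩
      show (a.eval v ⊔ b.eval v).1 = _
      rw [FinSublat.sup_val, ha1, hb1]
      rfl
  | himp a b iha ihb =>
      intro e hdeg he
      match e, hdeg with
      | e'+1, hdeg =>
        rw [HeytingTerm.degree, Nat.succ_le_succ_iff, max_le_iff] at hdeg
        have he' : e' ≤ dmax := Nat.le_of_succ_le he
        obtain ⟨ha1, ha2⟩ := iha e' hdeg.1 he'
        obtain ⟨hb1, hb2⟩ := ihb e' hdeg.2 he'
        have hmem : (a.eval v).1 ⇨ (b.eval v).1 ∈ (filtSublat hG₀ dmax).D := by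
          rw [ha1, hb1]
          exact filtLevel_mono he (himp_mem_filtLevel ha2 hb2)
        refine ⟨?_, show a.eval (fun i => (v i).1) ⇨ b.eval (fun i => (v i).1) ∈ _ from
          himp_mem_filtLevel ha2 hb2⟩
        show ((a.eval v) ⇨ (b.eval v)).1 = _
        rw [FinSublat.himp_val _ hmem, ha1, hb1]
        rfl

/-- Inclusion of a subalgebra as a Heyting homomorphism. -/
def HeytingSubalgebra.incl {H : Type*} [HeytingAlgebra H] (S : HeytingSubalgebra H) :
    HeytingHom S.carrier H where
  toFun := Subtype.val
  map_sup' _ _ := rfl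
  map_inf' _ _ := rfl
  map_bot' := rfl
  map_himp' _ _ := rfl

universe u v w

theorem extClosed_of_embeds (H : Type u) [HeytingAlgebra H] (hlf : LocallyFiniteHA H)
    (hyp : ∀ (S : HeytingSubalgebra H), S.carrier.Finite →
        ∀ (B : Type w) [HeytingAlgebra B] [Finite B] (j : HeytingHom S.carrier B),
          Function.Injective j →
            ∃ k : HeytingHom B H, Function.Injective k ∧ ∀ a : S.carrier, k (j a) = ↑a) :
    IsExtClosed.{u, v} H := by
  classical
  intro K _ f hf l m κ t s a hsol
  obtain ⟨b, ht, hs⟩ := hsol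
  obtain ⟨S, hSfin, hSsub⟩ := hlf (Finset.image a Finset.univ)
  have haS : ∀ i, a i ∈ S.carrier := fun i =>
    hSsub (Finset.mem_coe.2 (Finset.mem_image.2 ⟨i, Finset.mem_univ i, rfl⟩))
  set w0 : Fin (l+m) → K := Fin.append (fun i => f (a i)) b with hw0
  set G₀ : Set K := (f '' S.carrier) ∪ Set.range w0 with hG₀def
  have hG₀ : G₀.Finite := (hSfin.image f).union (Set.finite_range w0)
  set dmax : ℕ := max t.degree (Finset.univ.sup fun k0 => (s k0).degree) with hdmax
  set P := filtSublat hG₀ dmax with hP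
  -- the embedding of S into the finite algebra P.D
  have hmemS : ∀ x : S.carrier, f x.1 ∈ P.D := fun x =>
    base_subset_filtLevel dmax (Set.mem_union_left _ (Set.mem_image_of_mem f x.2))
  set jD : HeytingHom S.carrier ↥P.D :=
    { toFun := fun x => ⟨f x.1, hmemS x⟩
      map_sup' := fun x y => Subtype.ext (map_sup f x.1 y.1)
      map_inf' := fun x y => Subtype.ext (map_inf f x.1 y.1)
      map_bot' := Subtype.ext (map_bot f)
      map_himp' := fun x y => by
        have hm : (⟨f x.1, hmemS x⟩ : ↥P.D).1 ⇨ (⟨f y.1, hmemS y⟩ : ↥P.D).1 ∈ P.D := by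
          rw [← map_himp f x.1 y.1]
          exact hmemS (x ⇨ y)
        refine Subtype.ext ?_
        rw [P.himp_val hm]
        exact map_himp f x.1 y.1 } with hjD
  have hjDinj : Function.Injective jD := by
    intro x y hxy
    exact Subtype.ext (hf (congrArg Subtype.val hxy))
  -- copy P.D into universe w
  obtain ⟨gemb, hgemb⟩ := exists_injective_nat ↥P.D
  set emb : ↥P.D → ULift.{w} ℕ := fun x => ULift.up (gemb x) with hembdef
  have hembinj : Function.Injective emb := fun x y hxy =>
    hgemb (congrArg ULift.down hxy)
  set c := mkCopy ↥P.D emb hembinj with hc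
  haveI : Finite c.β := Finite.of_injective c.toA c.toA_injective
  obtain ⟨k, hkinj, hk⟩ := hyp S hSfin c.β (c.ofA.comp jD)
    (fun x y hxy => hjDinj (c.ofA_injective hxy))
  set kD : HeytingHom ↥P.D H := k.comp c.ofA with hkD
  have hkDinj : Function.Injective kD := fun x y hxy => c.ofA_injective (hkinj hxy)
  have hkDj : ∀ x : S.carrier, kD (jD x) = x.1 := fun x => hk x
  -- the interpretation of the variables inside P.D
  set vD : Fin (l+m) → ↥P.D := fun i =>
    ⟨w0 i, base_subset_filtLevel dmax (Set.mem_union_right _ (Set.mem_range_self i))⟩ with hvD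
  have hv : ∀ i, (vD i).1 ∈ G₀ := fun i => Set.mem_union_right _ (Set.mem_range_self i)
  have hvals : (fun i => (vD i).1) = w0 := funext fun i => rfl
  have agree := eval_agree hG₀ dmax vD hv
  set b' : Fin m → H := fun i0 => kD (vD (Fin.natAdd l i0)) with hb'
  have key : Fin.append a b' = fun i => kD (vD i) := by
    funext i
    refine Fin.addCases (fun i0 => ?_) (fun i0 => ?_) i
    · rw [Fin.append_left]
      have h1 : vD (Fin.castAdd m i0) = jD ⟨a i0, haS i0⟩ := by
        apply Subtype.ext
        show w0 (Fin.castAdd m i0) = f (a i0)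
        rw [hw0]
        exact Fin.append_left _ _ i0
      rw [h1, hkDj ⟨a i0, haS i0⟩]
    · rw [Fin.append_right]
  have evalD_eq : ∀ (u : HeytingTerm (l+m)), u.degree ≤ dmax →
      (u.eval vD).1 = u.eval w0 := by
    intro u hdeg
    rw [← hvals]
    exact (agree u dmax hdeg le_rfl).1
  refine ⟨b', ?_, ?_⟩
  · rw [key, HeytingTerm.eval_hom kD vD t]
    have : t.eval vD = ⊤ := by
      apply Subtype.ext
      rw [evalD_eq t (le_max_left _ _), FinSublat.top_val]
      exact ht
    rw [this, map_top]
  · intro k0 hcon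
    rw [key, HeytingTerm.eval_hom kD vD (s k0)] at hcon
    have h2 : (s k0).eval vD = ⊤ := by
      have : kD ((s k0).eval vD) = kD ⊤ := by rw [hcon, map_top]
      exact hkDinj this
    have h3 : (s k0).eval w0 = ⊤ := by
      rw [← evalD_eq (s k0) (le_max_of_le_right (Finset.le_sup (f := fun k0 => (s k0).degree) (Finset.mem_univ k0))), h2]
      rfl
    exact hs k0 h3
end MPR
section MP
universe u v w

theorem embeds_of_extClosed (H : Type u) [HeytingAlgebra H] [Countable H]
    (hEC : IsExtClosed.{u, v} H) :
    ∀ (S : HeytingSubalgebra H), S.carrier.Finite →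
        ∀ (B : Type w) [HeytingAlgebra B] [Finite B] (j : HeytingHom S.carrier B),
          Function.Injective j →
            ∃ k : HeytingHom B H, Function.Injective k ∧ ∀ a : S.carrier, k (j a) = ↑a := by
  classical
  intro S hSfin B _ _ j hj
  by_cases hB : Subsingleton B
  · have hSbt : (⊥ : S.carrier) = ⊤ := hj (by rw [map_bot, map_top]; exact Subsingleton.elim _ _)
    have hHbt : (⊥ : H) = ⊤ := congrArg Subtype.val hSbt
    haveI hsH : Subsingleton H := ⟨fun x y => by
      have hx : x = ⊥ := le_antisymm (by rw [hHbt]; exact le_top) bot_le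
      have hy : y = ⊥ := le_antisymm (by rw [hHbt]; exact le_top) bot_le
      rw [hx, hy]⟩
    refine ⟨{ toFun := fun _ => ⊥
              map_sup' := fun _ _ => Subsingleton.elim _ _
              map_inf' := fun _ _ => Subsingleton.elim _ _
              map_bot' := Subsingleton.elim _ _
              map_himp' := fun _ _ => Subsingleton.elim _ _ },
      fun x y _ => Subsingleton.elim x y, fun a => Subsingleton.elim _ _⟩
  · have hBbt : (⊥ : B) ≠ ⊤ := by
      intro hbt
      exact hB ⟨fun x y => by
        have hx : x = ⊥ := le_antisymm (by rw [hbt]; exact le_top) bot_le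
        have hy : y = ⊥ := le_antisymm (by rw [hbt]; exact le_top) bot_le
        rw [hx, hy]⟩
    haveI : Fintype B := Fintype.ofFinite B
    haveI : Fintype S.carrier := hSfin.fintype
    set l : ℕ := Fintype.card S.carrier with hl
    set m : ℕ := Fintype.card B with hm
    set eS : Fin l ≃ S.carrier := (Fintype.equivFin S.carrier).symm with heS
    set eB : Fin m ≃ B := (Fintype.equivFin B).symm with heB
    set pairs : List (Fin m × Fin m) :=
      (List.finRange (m*m)).map (fun k0 => finProdFinEquiv.symm k0) with hpairs
    have hmem_pairs : ∀ p : Fin m × Fin m, p ∈ pairs := fun p =>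
      List.mem_map.2 ⟨finProdFinEquiv p, List.mem_finRange _, Equiv.symm_apply_apply _ _⟩
    set eqs : List (HeytingTerm (l+m)) :=
      (pairs.map (fun p => biimpT
        (.inf (.var (Fin.natAdd l p.1)) (.var (Fin.natAdd l p.2)))
        (.var (Fin.natAdd l (eB.symm (eB p.1 ⊓ eB p.2))))))
      ++ ((pairs.map (fun p => biimpT
        (.sup (.var (Fin.natAdd l p.1)) (.var (Fin.natAdd l p.2)))
        (.var (Fin.natAdd l (eB.symm (eB p.1 ⊔ eB p.2))))))
      ++ ((pairs.map (fun p => biimpT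
        (.himp (.var (Fin.natAdd l p.1)) (.var (Fin.natAdd l p.2)))
        (.var (Fin.natAdd l (eB.symm (eB p.1 ⇨ eB p.2))))))
      ++ (((List.finRange l).map (fun i => biimpT (.var (Fin.castAdd m i))
        (.var (Fin.natAdd l (eB.symm (j (eS i)))))))
      ++ [biimpT .bot (.var (Fin.natAdd l (eB.symm ⊥))),
          biimpT .top (.var (Fin.natAdd l (eB.symm ⊤)))]))) with heqs
    set t : HeytingTerm (l+m) := conjList eqs with hts
    set s : Fin (m*m) → HeytingTerm (l+m) := fun k0 =>
      if (finProdFinEquiv.symm k0).1 = (finProdFinEquiv.symm k0).2 then .bot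
      else biimpT (.var (Fin.natAdd l (finProdFinEquiv.symm k0).1))
        (.var (Fin.natAdd l (finProdFinEquiv.symm k0).2)) with hsdef
    set a : Fin l → H := fun i => (eS i).1 with ha
    -- the amalgam and its copy in universe v
    have hι : Function.Injective S.incl := Subtype.val_injective
    set A := amalgamData (ι := S.incl) (j := j) hι hj with hA
    obtain ⟨fH, hfH⟩ := exists_injective_nat H
    obtain ⟨fB, hfB⟩ := exists_injective_nat B
    set code : AmalgSpace S.incl j → Set ℕ × Set ℕ :=
      fun z => (fH '' z.1.1.1, fB '' z.1.2.1) with hcodedef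
    have hcode : Function.Injective code := by
      intro z w hzw
      apply Subtype.ext
      exact Prod.ext (Subtype.ext (Set.image_injective.2 hfH (congrArg Prod.fst hzw)))
        (Subtype.ext (Set.image_injective.2 hfB (congrArg Prod.snd hzw)))
    set emb : A.K → ULift.{v} (Set (Set ℕ × Set ℕ)) :=
      fun U => ULift.up (code '' U.1) with hembdef
    have hembinj : Function.Injective emb := fun U V hUV =>
      UpSet.ext' (Set.image_injective.2 hcode (congrArg ULift.down hUV))
    set c := mkCopy A.K emb hembinj with hcdef
    set g' : HeytingHom H c.β := c.ofA.comp A.g with hg'def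
    have hg' : Function.Injective g' := fun x y hxy => A.hg (c.ofA_injective hxy)
    set h' : HeytingHom B c.β := c.ofA.comp A.h with hh'def
    have hh' : Function.Injective h' := fun x y hxy => A.hh (c.ofA_injective hxy)
    have hcomm : ∀ x : S.carrier, g' x.1 = h' (j x) := by
      intro x
      show c.ofA (A.g (S.incl x)) = c.ofA (A.h (j x))
      rw [A.comm x]
    set bK : Fin m → c.β := fun i0 => h' (eB i0) with hbK
    have hsolK : HasSolution t s (fun i => g' (a i)) := by
      refine ⟨bK, ?_, ?_⟩
      · rw [hts, conjList_eval_eq_top_iff]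
        intro u hu
        rw [heqs] at hu
        rcases List.mem_append.1 hu with h1 | hu
        · obtain ⟨p, -, rfl⟩ := List.mem_map.1 h1
          rw [biimpT_eval_eq_top_iff]
          simp only [HeytingTerm.eval_inf, HeytingTerm.eval_var, Fin.append_right]
          show h' (eB p.1) ⊓ h' (eB p.2) = h' (eB (eB.symm (eB p.1 ⊓ eB p.2)))
          rw [Equiv.apply_symm_apply, map_inf]
        · rcases List.mem_append.1 hu with h1 | hu
          · obtain ⟨p, -, rfl⟩ := List.mem_map.1 h1
            rw [biimpT_eval_eq_top_iff]
            simp only [HeytingTerm.eval_sup, HeytingTerm.eval_var, Fin.append_right]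
            show h' (eB p.1) ⊔ h' (eB p.2) = h' (eB (eB.symm (eB p.1 ⊔ eB p.2)))
            rw [Equiv.apply_symm_apply, map_sup]
          · rcases List.mem_append.1 hu with h1 | hu
            · obtain ⟨p, -, rfl⟩ := List.mem_map.1 h1
              rw [biimpT_eval_eq_top_iff]
              simp only [HeytingTerm.eval_himp, HeytingTerm.eval_var, Fin.append_right]
              show h' (eB p.1) ⇨ h' (eB p.2) = h' (eB (eB.symm (eB p.1 ⇨ eB p.2)))
              rw [Equiv.apply_symm_apply, map_himp]
            · rcases List.mem_append.1 hu with h1 | hu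
              · obtain ⟨i, -, rfl⟩ := List.mem_map.1 h1
                rw [biimpT_eval_eq_top_iff]
                simp only [HeytingTerm.eval_var, Fin.append_left, Fin.append_right]
                show g' (a i) = h' (eB (eB.symm (j (eS i))))
                rw [Equiv.apply_symm_apply]
                exact hcomm (eS i)
              · rcases List.mem_cons.1 hu with rfl | hu
                · rw [biimpT_eval_eq_top_iff]
                  simp only [HeytingTerm.eval_bot, HeytingTerm.eval_var, Fin.append_right]
                  show (⊥ : c.β) = h' (eB (eB.symm ⊥))
                  rw [Equiv.apply_symm_apply, map_bot]
                · rcases List.mem_cons.1 hu with rfl | hu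
                  · rw [biimpT_eval_eq_top_iff]
                    simp only [HeytingTerm.eval_top, HeytingTerm.eval_var, Fin.append_right]
                    show (⊤ : c.β) = h' (eB (eB.symm ⊤))
                    rw [Equiv.apply_symm_apply, map_top]
                  · exact absurd hu List.not_mem_nil
      · intro k0
        simp only [hsdef]
        by_cases hp : (finProdFinEquiv.symm k0).1 = (finProdFinEquiv.symm k0).2
        · rw [if_pos hp]
          simp only [HeytingTerm.eval_bot]
          intro hcon
          exact hBbt (hh' (by rw [map_bot, map_top, hcon]))
        · rw [if_neg hp]
          intro hcon
          rw [biimpT_eval_eq_top_iff] at hcon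
          simp only [HeytingTerm.eval_var, Fin.append_right] at hcon
          exact hp (eB.injective (hh' hcon))
    -- pull the solution back into H
    obtain ⟨b', ht', hs'⟩ := hEC c.β g' hg' t s a hsolK
    rw [hts, conjList_eval_eq_top_iff] at ht'
    have heval : ∀ p : Fin m × Fin m,
        (b' p.1 ⊓ b' p.2 = b' (eB.symm (eB p.1 ⊓ eB p.2))) ∧
        (b' p.1 ⊔ b' p.2 = b' (eB.symm (eB p.1 ⊔ eB p.2))) ∧
        (b' p.1 ⇨ b' p.2 = b' (eB.symm (eB p.1 ⇨ eB p.2))) := by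
      intro p
      refine ⟨?_, ?_, ?_⟩
      · have := ht' _ (by
          rw [heqs]
          exact List.mem_append_left _ (List.mem_map_of_mem (hmem_pairs p)))
        rw [biimpT_eval_eq_top_iff] at this
        simpa only [HeytingTerm.eval_inf, HeytingTerm.eval_var, Fin.append_right] using this
      · have := ht' _ (by
          rw [heqs]
          exact List.mem_append_right _ (List.mem_append_left _
            (List.mem_map_of_mem (hmem_pairs p))))
        rw [biimpT_eval_eq_top_iff] at this
        simpa only [HeytingTerm.eval_sup, HeytingTerm.eval_var, Fin.append_right] using this
      · have := ht' _ (by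
          rw [heqs]
          exact List.mem_append_right _ (List.mem_append_right _ (List.mem_append_left _
            (List.mem_map_of_mem (hmem_pairs p)))))
        rw [biimpT_eval_eq_top_iff] at this
        simpa only [HeytingTerm.eval_himp, HeytingTerm.eval_var, Fin.append_right] using this
    have hpar : ∀ i : Fin l, a i = b' (eB.symm (j (eS i))) := by
      intro i
      have := ht' _ (by
        rw [heqs]
        exact List.mem_append_right _ (List.mem_append_right _ (List.mem_append_right _
          (List.mem_append_left _ (List.mem_map_of_mem (List.mem_finRange i))))))
      rw [biimpT_eval_eq_top_iff] at this
      simpa only [HeytingTerm.eval_var, Fin.append_left, Fin.append_right] using this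
    have hbot : (⊥ : H) = b' (eB.symm ⊥) := by
      have := ht' _ (by
        rw [heqs]
        exact List.mem_append_right _ (List.mem_append_right _ (List.mem_append_right _
          (List.mem_append_right _ List.mem_cons_self))))
      rw [biimpT_eval_eq_top_iff] at this
      simpa only [HeytingTerm.eval_bot, HeytingTerm.eval_var, Fin.append_right] using this
    refine ⟨{ toFun := fun x => b' (eB.symm x)
              map_sup' := fun x y => by
                have h1 := (heval (eB.symm x, eB.symm y)).2.1
                simp only [Equiv.apply_symm_apply] at h1
                exact h1.symm
              map_inf' := fun x y => by
                have h1 := (heval (eB.symm x, eB.symm y)).1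
                simp only [Equiv.apply_symm_apply] at h1
                exact h1.symm
              map_bot' := hbot.symm
              map_himp' := fun x y => by
                have h1 := (heval (eB.symm x, eB.symm y)).2.2
                simp only [Equiv.apply_symm_apply] at h1
                exact h1.symm }, ?_, ?_⟩
    · intro x y hxy
      by_contra hne
      have hidx : eB.symm x ≠ eB.symm y := fun hcon => hne (by
        rw [← eB.apply_symm_apply x, ← eB.apply_symm_apply y, hcon])
      have hcon := hs' (finProdFinEquiv (eB.symm x, eB.symm y))
      simp only [hsdef, Equiv.symm_apply_apply] at hcon
      apply hcon
      rw [if_neg hidx, biimpT_eval_eq_top_iff]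
      simp only [HeytingTerm.eval_var, Fin.append_right]
      exact hxy
    · intro aS
      have h1 := hpar (eS.symm aS)
      rw [show a (eS.symm aS) = ((eS (eS.symm aS)) : S.carrier).1 from rfl] at h1
      simp only [Equiv.apply_symm_apply] at h1
      exact h1.symm
end MP
/-- A countable locally finite Heyting algebra is existentially closed iff every finite
extension of a finite subalgebra of `H` embeds into `H` over that subalgebra. -/
theorem countable_locallyFinite_extClosed_iff_finite_extension_embeds
    (H : Type*) [HeytingAlgebra H] [Countable H] (hlf : LocallyFiniteHA H) :
    IsExtClosed H ↔
      ∀ (S : HeytingSubalgebra H), S.carrier.Finite →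
        ∀ (B : Type*) [HeytingAlgebra B] [Finite B] (j : HeytingHom S.carrier B),
          Function.Injective j →
            ∃ k : HeytingHom B H, Function.Injective k ∧ ∀ a : S.carrier, k (j a) = ↑a := by
  exact ⟨fun hEC => embeds_of_extClosed H hEC, fun hyp => extClosed_of_embeds H hlf hyp⟩
end

section
/- A Heyting algebra A has the QE property if and only if for every n ∈ ℕ and every first-order L_HA-formula φ with n free variables there exists a quantifier-free L_HA-formula ψ with n free variables such that for every tuple ā ∈ Aⁿ, A satisfies φ(ā) if and only if A satisfies ψ(ā). -/
/-- `a ≈ₙ a'`: the tuples satisfy the same equations `t = ⊤` for terms of degree `≤ n`. -/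
def SimDeg {l : ℕ} {A : Type*} [HeytingAlgebra A] (n : ℕ) (a a' : Fin l → A) : Prop :=
  ∀ t : HeytingTerm l, t.degree ≤ n → (t.eval a = ⊤ ↔ t.eval a' = ⊤)

/-- `n` witnesses the `(l,d)`-index property for `A`: for all `a ≈ₙ a'` and every system
of degree `≤ d` in `l` parameters and one unknown, `S(a,q)` is solvable in `A` iff
`S(a',q)` is. -/
def IndexProp (A : Type*) [HeytingAlgebra A] (l d n : ℕ) : Prop :=
  ∀ a a' : Fin l → A, SimDeg n a a' →
    ∀ (κ : ℕ) (t : HeytingTerm (l + 1)) (s : Fin κ → HeytingTerm (l + 1)),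
      t.degree ≤ d → (∀ k, (s k).degree ≤ d) →
      (HasSolution t s a ↔ HasSolution t s a')

/-- The `(l,d)`-index `h_{l,d}(A) ∈ ℕ ∪ {∞}`: the least `n` satisfying `IndexProp A l d n`,
or `∞` if there is none. -/
noncomputable def hIndex (A : Type*) [HeytingAlgebra A] (l d : ℕ) : ℕ∞ :=
  sInf {x : ℕ∞ | ∃ n : ℕ, x = ↑n ∧ IndexProp A l d n}

/-- The QE property: all the `(l,d)`-indices are finite. -/
def HasQEProp (A : Type*) [HeytingAlgebra A] : Prop :=
  ∀ l d : ℕ, hIndex A l d < ⊤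

/-- The function symbols of the first-order language of Heyting algebras: two constants
(`⊥`, `⊤`) and three binary operations (`⊓`, `⊔`, `⇨`). -/
inductive LHAFunc : ℕ → Type
  | bot : LHAFunc 0
  | top : LHAFunc 0
  | inf : LHAFunc 2
  | sup : LHAFunc 2
  | himp : LHAFunc 2

/-- The first-order language of Heyting algebras. -/
def LHA : FirstOrder.Language := ⟨LHAFunc, fun _ => Empty⟩

/-- Every Heyting algebra is an `LHA`-structure, interpreting the symbols by the
Heyting operations. -/
instance LHA.structure (H : Type*) [HeytingAlgebra H] : LHA.Structure H where
  funMap {_} f x :=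
    match f with
    | .bot => ⊥
    | .top => ⊤
    | .inf => x 0 ⊓ x 1
    | .sup => x 0 ⊔ x 1
    | .himp => x 0 ⇨ x 1
  RelMap {_} r := Empty.elim r

/-! ### Auxiliary machinery -/

namespace QEAux

open FirstOrder FirstOrder.Language

/-! #### Normal forms for Heyting terms of bounded degree -/

/-- Atoms for degree-`d` normal forms. -/
def Atom (m : ℕ) : ℕ → Type
  | 0 => Fin m
  | d+1 => Fin m ⊕ (Finset (Finset (Atom m d)) × Finset (Finset (Atom m d)))

instance decEqAtom (m : ℕ) : ∀ d, DecidableEq (Atom m d)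
  | 0 => inferInstanceAs (DecidableEq (Fin m))
  | d+1 => letI := decEqAtom m d; inferInstanceAs (DecidableEq (Fin m ⊕ _))

instance fintypeAtom (m : ℕ) : ∀ d, Fintype (Atom m d)
  | 0 => inferInstanceAs (Fintype (Fin m))
  | d+1 => letI := fintypeAtom m d; inferInstanceAs (Fintype (Fin m ⊕ _))

/-- Degree-`d` normal forms: joins of meets of atoms. -/
abbrev NF (m d : ℕ) : Type := Finset (Finset (Atom m d))

variable {H : Type*} [HeytingAlgebra H] {m : ℕ}

def evalAtom : ∀ d, Atom m d → (Fin m → H) → H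
  | 0, i, v => v i
  | _+1, Sum.inl i, v => v i
  | d+1, Sum.inr (N₁, N₂), v =>
      (N₁.sup fun T => T.inf fun a => evalAtom d a v) ⇨
        (N₂.sup fun T => T.inf fun a => evalAtom d a v)

def evalNF (d : ℕ) (S : NF m d) (v : Fin m → H) : H :=
  S.sup fun T => T.inf fun a => evalAtom d a v

lemma evalAtom_inr (d : ℕ) (N₁ N₂ : NF m d) (v : Fin m → H) :
    evalAtom (d+1) (Sum.inr (N₁, N₂)) v = evalNF d N₁ v ⇨ evalNF d N₂ v := rfl

def varAtom (m : ℕ) : ∀ d, Fin m → Atom m d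
  | 0, i => i
  | _+1, i => Sum.inl i

lemma evalAtom_varAtom (d : ℕ) (i : Fin m) (v : Fin m → H) :
    evalAtom d (varAtom m d i) v = v i := by
  cases d <;> rfl

/-- Meet of two normal forms. -/
def nfInf {d : ℕ} (S T : NF m d) : NF m d := (S ×ˢ T).image fun p => p.1 ∪ p.2

lemma evalNF_nfInf {d : ℕ} (S T : NF m d) (v : Fin m → H) :
    evalNF d (nfInf S T) v = evalNF d S v ⊓ evalNF d T v := by
  unfold evalNF nfInf
  rw [Finset.sup_image, Finset.sup_product_left, Finset.sup_inf_distrib_right]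
  refine Finset.sup_congr rfl fun a _ => ?_
  rw [Finset.sup_inf_distrib_left]
  refine Finset.sup_congr rfl fun b _ => ?_
  simp [Function.comp, Finset.inf_union]

lemma evalNF_union {d : ℕ} (S T : NF m d) (v : Fin m → H) :
    evalNF d (S ∪ T) v = evalNF d S v ⊔ evalNF d T v := Finset.sup_union

lemma evalNF_empty {d : ℕ} (v : Fin m → H) : evalNF d (∅ : NF m d) v = ⊥ := rfl

lemma evalNF_topNF {d : ℕ} (v : Fin m → H) : evalNF d ({∅} : NF m d) v = ⊤ := by
  simp [evalNF]

lemma evalNF_single {d : ℕ} (a : Atom m d) (v : Fin m → H) :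
    evalNF d ({{a}} : NF m d) v = evalAtom d a v := by
  simp [evalNF]

open HeytingTerm in
/-- Normalization of a term of degree ≤ d. -/
def toNF : ∀ (t : HeytingTerm m) (d : ℕ), t.degree ≤ d → NF m d
  | .var i, d, _ => {{varAtom m d i}}
  | .bot, _, _ => ∅
  | .top, _, _ => {∅}
  | .inf a b, d, h => nfInf (toNF a d (le_trans (le_max_left _ _) h))
      (toNF b d (le_trans (le_max_right _ _) h))
  | .sup a b, d, h => toNF a d (le_trans (le_max_left _ _) h) ∪
      toNF b d (le_trans (le_max_right _ _) h)
  | .himp _ _, 0, h => absurd h (by simp [degree])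
  | .himp a b, d+1, h => {{Sum.inr
      (toNF a d (le_trans (le_max_left _ _) (Nat.succ_le_succ_iff.mp h)),
       toNF b d (le_trans (le_max_right _ _) (Nat.succ_le_succ_iff.mp h)))}}

lemma evalNF_toNF (t : HeytingTerm m) (d : ℕ) (h : t.degree ≤ d) (v : Fin m → H) :
    evalNF d (toNF t d h) v = t.eval v := by
  induction t generalizing d with
  | var i => rw [toNF, evalNF_single, evalAtom_varAtom]; rfl
  | bot => rw [toNF, evalNF_empty]; rfl
  | top => rw [toNF, evalNF_topNF]; rfl
  | inf a b iha ihb => rw [toNF, evalNF_nfInf, iha, ihb]; rfl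
  | sup a b iha ihb => rw [toNF, evalNF_union, iha, ihb]; rfl
  | himp a b iha ihb =>
    cases d with
    | zero => exact absurd h (by simp [HeytingTerm.degree])
    | succ d =>
      rw [toNF]
      exact (evalNF_single (d := d+1) (Sum.inr _) v).trans (by rw [evalAtom_inr, iha, ihb]; rfl)

lemma finset_sup_eq_foldr {α : Type*} [DecidableEq α] (S : Finset α) (f : α → H) :
    S.sup f = (S.toList.map f).foldr (· ⊔ ·) ⊥ := by
  rw [Finset.sup_def, ← Finset.coe_toList S, Multiset.map_coe, Multiset.sup_coe]

lemma finset_inf_eq_foldr {α : Type*} [DecidableEq α] (S : Finset α) (f : α → H) :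
    S.inf f = (S.toList.map f).foldr (· ⊓ ·) ⊤ := by
  rw [Finset.inf_def, ← Finset.coe_toList S, Multiset.map_coe, Multiset.inf_coe]

def listSup : List (HeytingTerm m) → HeytingTerm m := fun L => L.foldr .sup .bot
def listInf : List (HeytingTerm m) → HeytingTerm m := fun L => L.foldr .inf .top

lemma eval_listSup (L : List (HeytingTerm m)) (v : Fin m → H) :
    (listSup L).eval v = (L.map (·.eval v)).foldr (· ⊔ ·) ⊥ := by
  induction L with
  | nil => rfl
  | cons a L ih => simp only [listSup, List.foldr, List.map] at *; rw [← ih]; rfl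

lemma eval_listInf (L : List (HeytingTerm m)) (v : Fin m → H) :
    (listInf L).eval v = (L.map (·.eval v)).foldr (· ⊓ ·) ⊤ := by
  induction L with
  | nil => rfl
  | cons a L ih => simp only [listInf, List.foldr, List.map] at *; rw [← ih]; rfl

lemma degree_listSup (L : List (HeytingTerm m)) (k : ℕ) (h : ∀ t ∈ L, t.degree ≤ k) :
    (listSup L).degree ≤ k := by
  induction L with
  | nil => exact Nat.zero_le k
  | cons a L ih =>
    simp only [listSup, List.foldr] at *
    exact max_le (h a (by simp)) (ih fun t ht => h t (by simp [ht]))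

lemma degree_listInf (L : List (HeytingTerm m)) (k : ℕ) (h : ∀ t ∈ L, t.degree ≤ k) :
    (listInf L).degree ≤ k := by
  induction L with
  | nil => exact Nat.zero_le k
  | cons a L ih =>
    simp only [listInf, List.foldr] at *
    exact max_le (h a (by simp)) (ih fun t ht => h t (by simp [ht]))

noncomputable def ofAtom : ∀ d, Atom m d → HeytingTerm m
  | 0, i => .var i
  | _+1, Sum.inl i => .var i
  | d+1, Sum.inr (N₁, N₂) =>
      .himp (listSup (N₁.toList.map fun T => listInf (T.toList.map (ofAtom d))))
            (listSup (N₂.toList.map fun T => listInf (T.toList.map (ofAtom d))))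

/-- A Heyting term representing a normal form. -/
noncomputable def ofNF (d : ℕ) (S : NF m d) : HeytingTerm m :=
  listSup (S.toList.map fun T => listInf (T.toList.map (ofAtom d)))

lemma ofAtom_inr (d : ℕ) (N₁ N₂ : NF m d) :
    ofAtom (d+1) (Sum.inr (N₁, N₂)) = .himp (ofNF d N₁) (ofNF d N₂) := rfl

lemma eval_ofAtom : ∀ (d : ℕ) (a : Atom m d) (v : Fin m → H),
    (ofAtom d a).eval v = evalAtom d a v
  | 0, _, _ => rfl
  | _+1, Sum.inl _, _ => rfl
  | d+1, Sum.inr (N₁, N₂), v => by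
    rw [ofAtom_inr, evalAtom_inr]
    show (ofNF d N₁).eval v ⇨ (ofNF d N₂).eval v = _
    have key : ∀ S : NF m d, (ofNF d S).eval v = evalNF d S v := by
      intro S
      rw [ofNF, eval_listSup, evalNF, finset_sup_eq_foldr, List.map_map]
      congr 1
      refine List.map_congr_left fun T _ => ?_
      show (listInf (T.toList.map (ofAtom d))).eval v = _
      rw [eval_listInf, finset_inf_eq_foldr, List.map_map]
      congr 1
      exact List.map_congr_left fun a _ => eval_ofAtom d a v
    rw [key, key]

lemma eval_ofNF (d : ℕ) (S : NF m d) (v : Fin m → H) :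
    (ofNF d S).eval v = evalNF d S v := by
  rw [ofNF, eval_listSup, evalNF, finset_sup_eq_foldr, List.map_map]
  congr 1
  refine List.map_congr_left fun T _ => ?_
  show (listInf (T.toList.map (ofAtom d))).eval v = _
  rw [eval_listInf, finset_inf_eq_foldr, List.map_map]
  congr 1
  exact List.map_congr_left fun a _ => eval_ofAtom d a v

lemma degree_ofAtom : ∀ (d : ℕ) (a : Atom m d), (ofAtom d a).degree ≤ d
  | 0, _ => le_refl 0
  | _+1, Sum.inl _ => Nat.zero_le _
  | d+1, Sum.inr (N₁, N₂) => by
    rw [ofAtom_inr]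
    have key : ∀ S : NF m d, (ofNF d S).degree ≤ d := by
      intro S
      refine degree_listSup _ _ fun t ht => ?_
      simp only [List.mem_map] at ht
      obtain ⟨T, _, rfl⟩ := ht
      refine degree_listInf _ _ fun t ht => ?_
      simp only [List.mem_map] at ht
      obtain ⟨a, _, rfl⟩ := ht
      exact degree_ofAtom d a
    exact Nat.succ_le_succ (max_le (key N₁) (key N₂))

lemma degree_ofNF (d : ℕ) (S : NF m d) : (ofNF d S).degree ≤ d := by
  refine degree_listSup _ _ fun t ht => ?_
  simp only [List.mem_map] at ht
  obtain ⟨T, _, rfl⟩ := ht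
  refine degree_listInf _ _ fun t ht => ?_
  simp only [List.mem_map] at ht
  obtain ⟨a, _, rfl⟩ := ht
  exact degree_ofAtom d a

/-! #### Types of tuples -/

variable {A : Type*} [HeytingAlgebra A]

/-- The degree-`D` "type" of a tuple: the set of normal forms evaluating to `⊤` on it. -/
noncomputable def tp (M D : ℕ) (v : Fin M → A) : Finset (NF M D) :=
  @Finset.filter _ (fun N => evalNF D N v = ⊤) (Classical.decPred _) Finset.univ

lemma mem_tp {M D : ℕ} {v : Fin M → A} {N : NF M D} :
    N ∈ tp M D v ↔ evalNF D N v = ⊤ := by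
  simp [tp, Finset.mem_filter]

lemma simDeg_mono {M : ℕ} {v w : Fin M → A} {D D' : ℕ} (h : D' ≤ D)
    (hs : SimDeg D v w) : SimDeg D' v w :=
  fun t ht => hs t (le_trans ht h)

lemma simDeg_iff_tp_eq {M D : ℕ} {v w : Fin M → A} :
    SimDeg D v w ↔ tp M D v = tp M D w := by
  constructor
  · intro hs
    ext N
    rw [mem_tp, mem_tp, ← eval_ofNF, ← eval_ofNF]
    exact hs _ (degree_ofNF D N)
  · intro h t ht
    rw [← evalNF_toNF t D ht v, ← evalNF_toNF t D ht w, ← mem_tp, ← mem_tp, h]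

lemma simDeg_symm {M D : ℕ} {v w : Fin M → A} (h : SimDeg D v w) : SimDeg D w v :=
  fun t ht => (h t ht).symm

/-- The system associated to a candidate type `T`. -/
noncomputable def tpTerm {M : ℕ} (D : ℕ) (T : Finset (NF M D)) : HeytingTerm M :=
  listInf (T.toList.map (ofNF D))

lemma degree_tpTerm {M : ℕ} (D : ℕ) (T : Finset (NF M D)) : (tpTerm D T).degree ≤ D := by
  refine degree_listInf _ _ fun t ht => ?_
  simp only [List.mem_map] at ht
  obtain ⟨N, _, rfl⟩ := ht
  exact degree_ofNF D N

lemma eval_tpTerm_eq_top {M D : ℕ} (T : Finset (NF M D)) (v : Fin M → A) :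
    (tpTerm D T).eval v = ⊤ ↔ ∀ N ∈ T, evalNF D N v = ⊤ := by
  rw [tpTerm, eval_listInf, List.map_map, ← finset_inf_eq_foldr]
  rw [Finset.inf_eq_top_iff]
  exact forall₂_congr fun N _ => by rw [Function.comp_apply, eval_ofNF]

lemma tp_eq_iff {M D : ℕ} (T : Finset (NF M D)) (v : Fin M → A) :
    tp M D v = T ↔
      ((∀ N ∈ T, evalNF D N v = ⊤) ∧ ∀ N ∉ T, evalNF D N v ≠ ⊤) := by
  constructor
  · rintro rfl
    exact ⟨fun N hN => mem_tp.mp hN, fun N hN => fun h => hN (mem_tp.mpr h)⟩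
  · rintro ⟨h1, h2⟩
    ext N
    rw [mem_tp]
    constructor
    · intro h; by_contra hN; exact h2 N hN h
    · exact h1 N

/-- A predicate invariant under `SimDeg D` is classified by the type. -/
lemma invariant_classified {M D : ℕ} (P : (Fin M → A) → Prop)
    (hP : ∀ v w : Fin M → A, SimDeg D v w → (P v ↔ P w)) :
    ∀ v : Fin M → A, P v ↔ tp M D v ∈
      @Finset.filter _ (fun T => ∃ w, P w ∧ tp M D w = T) (Classical.decPred _)
        Finset.univ := by
  intro v
  constructor
  · intro h
    simp only [Finset.mem_filter, Finset.mem_univ, true_and]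
    exact ⟨v, h, rfl⟩
  · intro h
    simp only [Finset.mem_filter, Finset.mem_univ, true_and] at h
    obtain ⟨w, hw, hwt⟩ := h
    exact (hP w v (simDeg_iff_tp_eq.mpr hwt)).mp hw

/-! #### First-order terms and formulas from Heyting terms -/

/-- The `LHA`-term corresponding to a Heyting term, with variables renamed by `g`. -/
def termOf {M : ℕ} {β : Type*} : HeytingTerm M → (Fin M → β) → LHA.Term β
  | .var i, g => Term.var (g i)
  | .bot, _ => Term.func LHAFunc.bot Fin.elim0
  | .top, _ => Term.func LHAFunc.top Fin.elim0
  | .inf a b, g => Term.func LHAFunc.inf ![termOf a g, termOf b g]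
  | .sup a b, g => Term.func LHAFunc.sup ![termOf a g, termOf b g]
  | .himp a b, g => Term.func LHAFunc.himp ![termOf a g, termOf b g]

lemma funMap_bot (x : Fin 0 → A) : Structure.funMap (L := LHA) LHAFunc.bot x = ⊥ := rfl
lemma funMap_top (x : Fin 0 → A) : Structure.funMap (L := LHA) LHAFunc.top x = ⊤ := rfl
lemma funMap_inf (x : Fin 2 → A) : Structure.funMap (L := LHA) LHAFunc.inf x = x 0 ⊓ x 1 := rfl
lemma funMap_sup (x : Fin 2 → A) : Structure.funMap (L := LHA) LHAFunc.sup x = x 0 ⊔ x 1 := rfl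
lemma funMap_himp (x : Fin 2 → A) : Structure.funMap (L := LHA) LHAFunc.himp x = x 0 ⇨ x 1 := rfl

lemma realize_termOf {M : ℕ} {β : Type*} (t : HeytingTerm M) (g : Fin M → β)
    (w : β → A) : (termOf t g).realize w = t.eval (w ∘ g) := by
  induction t with
  | var i => rfl
  | bot => rfl
  | top => rfl
  | inf a b iha ihb =>
    show Structure.funMap (L := LHA) LHAFunc.inf
      (fun i => (![termOf a g, termOf b g] i).realize w) = _
    rw [funMap_inf]
    simp only [Matrix.cons_val_zero, Matrix.cons_val_one, Matrix.head_cons, iha, ihb]; rfl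
  | sup a b iha ihb =>
    show Structure.funMap (L := LHA) LHAFunc.sup
      (fun i => (![termOf a g, termOf b g] i).realize w) = _
    rw [funMap_sup]
    simp only [Matrix.cons_val_zero, Matrix.cons_val_one, Matrix.head_cons, iha, ihb]; rfl
  | himp a b iha ihb =>
    show Structure.funMap (L := LHA) LHAFunc.himp
      (fun i => (![termOf a g, termOf b g] i).realize w) = _
    rw [funMap_himp]
    simp only [Matrix.cons_val_zero, Matrix.cons_val_one, Matrix.head_cons, iha, ihb]; rfl

/-- The quantifier-free formula expressing `t = ⊤`. -/
def eqTopF {M k : ℕ} {α : Type*} (t : HeytingTerm M) (g : Fin M → α ⊕ Fin k) :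
    LHA.BoundedFormula α k :=
  Term.bdEqual (termOf t g) (termOf .top g)

lemma isQF_eqTopF {M k : ℕ} {α : Type*} (t : HeytingTerm M) (g : Fin M → α ⊕ Fin k) :
    (eqTopF t g).IsQF :=
  (BoundedFormula.IsAtomic.equal _ _).isQF

lemma realize_eqTopF {M k : ℕ} {α : Type*} (t : HeytingTerm M) (g : Fin M → α ⊕ Fin k)
    (v : α → A) (xs : Fin k → A) :
    (eqTopF t g).Realize v xs ↔ t.eval (Sum.elim v xs ∘ g) = ⊤ := by
  rw [eqTopF, BoundedFormula.realize_bdEqual, realize_termOf, realize_termOf]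
  show _ ↔ _ = (⊤ : A)
  exact Iff.rfl

/-! #### Index shuffling lemmas -/

lemma elim_comp_addCases {n m : ℕ} {α : Type*} (a : Fin n → α) (x : Fin m → α) :
    (Sum.elim a x ∘ fun i =>
        Fin.addCases (motive := fun _ => Fin n ⊕ Fin m) Sum.inl Sum.inr i)
      = Fin.append a x := by
  funext i
  refine Fin.addCases (fun j => ?_) (fun j => ?_) i <;>
    simp [Fin.addCases_left, Fin.addCases_right, Fin.append_left, Fin.append_right]

lemma append_comp_castAdd {n m : ℕ} {α : Type*} (a : Fin n → α) (x : Fin m → α) (b : α) :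
    (Fin.append (Fin.append a x) (fun _ : Fin 1 => b)) ∘ Fin.castAdd (m + 1) = a := by
  funext i
  have h : (Fin.castAdd (m+1) i : Fin (n + m + 1)) = Fin.castAdd 1 (Fin.castAdd m i) := by
    ext; rfl
  rw [Function.comp_apply, h, Fin.append_left, Fin.append_left]

lemma append_comp_natAdd {n m : ℕ} {α : Type*} (a : Fin n → α) (x : Fin m → α) (b : α) :
    (Fin.append (Fin.append a x) (fun _ : Fin 1 => b)) ∘ Fin.natAdd n = Fin.snoc x b := by
  funext k
  refine Fin.lastCases ?_ (fun j => ?_) k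
  · have h : (Fin.natAdd n (Fin.last m) : Fin (n + m + 1)) = Fin.natAdd (n+m) (0 : Fin 1) := by
      ext; simp [Fin.natAdd, Fin.last]
    rw [Function.comp_apply, h, Fin.append_right, Fin.snoc_last]
  · have h : (Fin.natAdd n (Fin.castSucc j) : Fin (n + m + 1))
        = Fin.castAdd 1 (Fin.natAdd n j) := by
      ext; rfl
    rw [Function.comp_apply, h, Fin.append_left, Fin.append_right, Fin.snoc_castSucc]

/-! #### Quantifier-free formulas are determined by types -/

/-- Every `LHA`-term over split variables is realized by a Heyting term. -/
lemma exists_heytingTerm {n mm : ℕ} (t : LHA.Term (Fin n ⊕ Fin mm)) :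
    ∃ h : HeytingTerm (n + mm), ∀ v : Fin (n + mm) → A,
      t.realize (Sum.elim (v ∘ Fin.castAdd mm) (v ∘ Fin.natAdd n)) = h.eval v := by
  induction t with
  | var z =>
    cases z with
    | inl i => exact ⟨.var (Fin.castAdd mm i), fun v => rfl⟩
    | inr k => exact ⟨.var (Fin.natAdd n k), fun v => rfl⟩
  | func f ts ih =>
    choose h hh using ih
    cases f with
    | bot => exact ⟨.bot, fun v => rfl⟩
    | top => exact ⟨.top, fun v => rfl⟩
    | inf => exact ⟨.inf (h 0) (h 1), fun v => by
        show Structure.funMap (L := LHA) LHAFunc.inf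
          (fun i => (ts i).realize (Sum.elim (v ∘ Fin.castAdd mm) (v ∘ Fin.natAdd n))) = _
        rw [funMap_inf]; simp only [hh]; rfl⟩
    | sup => exact ⟨.sup (h 0) (h 1), fun v => by
        show Structure.funMap (L := LHA) LHAFunc.sup
          (fun i => (ts i).realize (Sum.elim (v ∘ Fin.castAdd mm) (v ∘ Fin.natAdd n))) = _
        rw [funMap_sup]; simp only [hh]; rfl⟩
    | himp => exact ⟨.himp (h 0) (h 1), fun v => by
        show Structure.funMap (L := LHA) LHAFunc.himp
          (fun i => (ts i).realize (Sum.elim (v ∘ Fin.castAdd mm) (v ∘ Fin.natAdd n))) = _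
        rw [funMap_himp]; simp only [hh]; rfl⟩

/-- A quantifier-free formula's realization depends only on a sufficiently fine type of
the (combined) variable tuple. -/
lemma typeDet {n mm : ℕ} {θ : LHA.BoundedFormula (Fin n) mm} (hθ : θ.IsQF) :
    ∃ D : ℕ, ∀ v w : Fin (n + mm) → A, SimDeg D v w →
      (θ.Realize (v ∘ Fin.castAdd mm) (v ∘ Fin.natAdd n) ↔
        θ.Realize (w ∘ Fin.castAdd mm) (w ∘ Fin.natAdd n)) := by
  induction hθ with
  | falsum => exact ⟨0, fun v w _ => by simp [BoundedFormula.Realize]⟩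
  | @of_isAtomic φ h =>
    cases h with
    | equal t₁ t₂ =>
      obtain ⟨h₁, e₁⟩ := exists_heytingTerm (A := A) t₁
      obtain ⟨h₂, e₂⟩ := exists_heytingTerm (A := A) t₂
      refine ⟨max h₁.degree h₂.degree + 1, fun v w hs => ?_⟩
      have key := hs (.inf (.himp h₁ h₂) (.himp h₂ h₁))
        (by simp only [HeytingTerm.degree]; omega)
      simp only [HeytingTerm.eval, inf_eq_top_iff, himp_eq_top_iff] at key
      rw [BoundedFormula.realize_bdEqual, BoundedFormula.realize_bdEqual, e₁, e₂, e₁, e₂]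
      rw [le_antisymm_iff, le_antisymm_iff]
      exact key
    | rel R _ => exact Empty.elim R
  | @imp φ₁ φ₂ h₁ h₂ ih₁ ih₂ =>
    obtain ⟨D₁, hD₁⟩ := ih₁
    obtain ⟨D₂, hD₂⟩ := ih₂
    refine ⟨max D₁ D₂, fun v w hs => ?_⟩
    rw [BoundedFormula.realize_imp, BoundedFormula.realize_imp]
    rw [hD₁ v w (simDeg_mono (le_max_left _ _) hs),
      hD₂ v w (simDeg_mono (le_max_right _ _) hs)]

/-! #### Quantifier-free conjunctions/disjunctions -/

lemma isQF_foldr_sup {k : ℕ} {α : Type*} (L : List (LHA.BoundedFormula α k))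
    (h : ∀ φ ∈ L, φ.IsQF) : (L.foldr (· ⊔ ·) ⊥).IsQF := by
  induction L with
  | nil => exact BoundedFormula.isQF_bot
  | cons a L ih =>
    exact (h a (by simp)).sup (ih fun φ hφ => h φ (by simp [hφ]))

lemma isQF_foldr_inf {k : ℕ} {α : Type*} (L : List (LHA.BoundedFormula α k))
    (h : ∀ φ ∈ L, φ.IsQF) : (L.foldr (· ⊓ ·) ⊤).IsQF := by
  induction L with
  | nil => exact BoundedFormula.IsQF.top
  | cons a L ih =>
    exact (h a (by simp)).inf (ih fun φ hφ => h φ (by simp [hφ]))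

/-- Disjunction over a finset. -/
noncomputable def finsetISup {k : ℕ} {α β : Type*} (s : Finset β)
    (f : β → LHA.BoundedFormula α k) : LHA.BoundedFormula α k :=
  (s.toList.map f).foldr (· ⊔ ·) ⊥

/-- Conjunction over a finset. -/
noncomputable def finsetIInf {k : ℕ} {α β : Type*} (s : Finset β)
    (f : β → LHA.BoundedFormula α k) : LHA.BoundedFormula α k :=
  (s.toList.map f).foldr (· ⊓ ·) ⊤

lemma realize_finsetISup {k : ℕ} {α β : Type*} {s : Finset β}
    {f : β → LHA.BoundedFormula α k} {v : α → A} {xs : Fin k → A} :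
    (finsetISup s f).Realize v xs ↔ ∃ b ∈ s, (f b).Realize v xs := by
  simp only [finsetISup, BoundedFormula.realize_foldr_sup, List.mem_map, Finset.mem_toList]
  constructor
  · rintro ⟨_, ⟨b, hb, rfl⟩, h⟩; exact ⟨b, hb, h⟩
  · rintro ⟨b, hb, h⟩; exact ⟨_, ⟨b, hb, rfl⟩, h⟩

lemma realize_finsetIInf {k : ℕ} {α β : Type*} {s : Finset β}
    {f : β → LHA.BoundedFormula α k} {v : α → A} {xs : Fin k → A} :
    (finsetIInf s f).Realize v xs ↔ ∀ b ∈ s, (f b).Realize v xs := by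
  simp only [finsetIInf, BoundedFormula.realize_foldr_inf, List.mem_map, Finset.mem_toList]
  constructor
  · intro h b hb; exact h _ ⟨b, hb, rfl⟩
  · rintro h _ ⟨b, hb, rfl⟩; exact h b hb

lemma isQF_iSup {k : ℕ} {α β : Type*} (s : Finset β) (f : β → LHA.BoundedFormula α k)
    (h : ∀ b ∈ s, (f b).IsQF) : (finsetISup s f).IsQF := by
  refine isQF_foldr_sup _ fun φ hφ => ?_
  simp only [List.mem_map, Finset.mem_toList] at hφ
  obtain ⟨b, hb, rfl⟩ := hφ
  exact h b hb

lemma isQF_iInf {k : ℕ} {α β : Type*} (s : Finset β) (f : β → LHA.BoundedFormula α k)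
    (h : ∀ b ∈ s, (f b).IsQF) : (finsetIInf s f).IsQF := by
  refine isQF_foldr_inf _ fun φ hφ => ?_
  simp only [List.mem_map, Finset.mem_toList] at hφ
  obtain ⟨b, hb, rfl⟩ := hφ
  exact h b hb


/-! #### Systems from candidate types -/

lemma hasSolution_tp_eq {l D : ℕ} (T : Finset (NF (l+1) D)) (c : Fin l → A) :
    (∃ b : Fin 1 → A, tp (l+1) D (Fin.append c b) = T) ↔
      HasSolution (tpTerm D T)
        (fun k : Fin (Tᶜ.toList.length) => ofNF D (Tᶜ.toList.get k)) c := by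
  unfold HasSolution IsSolution
  refine exists_congr fun b => ?_
  rw [tp_eq_iff]
  apply and_congr
  · exact (eval_tpTerm_eq_top T _).symm
  · constructor
    · intro h k
      rw [eval_ofNF]
      exact h _ (Finset.mem_compl.mp (Finset.mem_toList.mp (List.get_mem _ _)))
    · intro h N hN
      have hmem : N ∈ Tᶜ.toList := Finset.mem_toList.mpr (Finset.mem_compl.mpr hN)
      obtain ⟨k, hk⟩ := List.mem_iff_get.mp hmem
      intro htop
      exact h k (by rw [eval_ofNF, hk]; exact htop)

/-- Extract a witness of the index property from finiteness of the index. -/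
lemma exists_indexProp {l d : ℕ} (h : hIndex A l d < ⊤) : ∃ n : ℕ, IndexProp A l d n := by
  by_contra hc
  push_neg at hc
  have he : {x : ℕ∞ | ∃ k : ℕ, x = (k : ℕ∞) ∧ IndexProp A l d k} = ∅ := by
    ext x
    simp only [Set.mem_setOf_eq, Set.mem_empty_iff_false, iff_false, not_exists]
    rintro k ⟨rfl, hk⟩
    exact hc k hk
  rw [hIndex, he, sInf_empty] at h
  exact lt_irrefl _ h

/-! #### Existential quantifier elimination -/

lemma exElim (hQE : HasQEProp A) {n m : ℕ} (θ : LHA.BoundedFormula (Fin n) (m+1))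
    (hθ : θ.IsQF) :
    ∃ χ : LHA.BoundedFormula (Fin n) m, χ.IsQF ∧ ∀ (a : Fin n → A) (x : Fin m → A),
      (χ.Realize a x ↔ ∃ b : A, θ.Realize a (Fin.snoc x b)) := by
  classical
  obtain ⟨D, hD⟩ := typeDet (A := A) hθ
  obtain ⟨n₁, hIdx⟩ := exists_indexProp (A := A) (hQE (n + m) D)
  -- the predicate given by θ on combined tuples
  set R : (Fin ((n + m) + 1) → A) → Prop :=
    fun v => θ.Realize (v ∘ Fin.castAdd (m+1)) (v ∘ Fin.natAdd n) with hRdef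
  have hRinv : ∀ v w : Fin ((n + m) + 1) → A, SimDeg D v w → (R v ↔ R w) :=
    fun v w hs => hD v w hs
  have hRG := invariant_classified (A := A) (M := (n+m)+1) (D := D) R hRinv
  set G : Finset (Finset (NF ((n+m)+1) D)) :=
    @Finset.filter _ (fun T => ∃ w, R w ∧ tp ((n+m)+1) D w = T) (Classical.decPred _)
      Finset.univ with hGdef
  -- the projected predicate
  set P : (Fin (n + m) → A) → Prop :=
    fun c => ∃ b : Fin 1 → A, R (Fin.append c b) with hPdef
  have hPsys : ∀ c : Fin (n+m) → A, P c ↔ ∃ T ∈ G, HasSolution (tpTerm D T)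
      (fun k : Fin (Tᶜ.toList.length) => ofNF D (Tᶜ.toList.get k)) c := by
    intro c
    constructor
    · rintro ⟨b, hb⟩
      exact ⟨tp ((n+m)+1) D (Fin.append c b), (hRG _).mp hb,
        (hasSolution_tp_eq _ c).mp ⟨b, rfl⟩⟩
    · rintro ⟨T, hT, hsol⟩
      obtain ⟨b, hb⟩ := (hasSolution_tp_eq T c).mpr hsol
      exact ⟨b, (hRG _).mpr (hb ▸ hT)⟩
  have hPinv : ∀ c c' : Fin (n+m) → A, SimDeg n₁ c c' → (P c ↔ P c') := by
    intro c c' hs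
    rw [hPsys, hPsys]
    exact exists_congr fun T => and_congr_right fun _ =>
      hIdx c c' hs _ _ _ (degree_tpTerm D T) (fun k => degree_ofNF _ _)
  have hPG := invariant_classified (A := A) (M := n+m) (D := n₁) P hPinv
  set G₂ : Finset (Finset (NF (n+m) n₁)) :=
    @Finset.filter _ (fun T => ∃ w, P w ∧ tp (n+m) n₁ w = T) (Classical.decPred _)
      Finset.univ with hG₂def
  -- build the quantifier-free formula
  set g : Fin (n+m) → Fin n ⊕ Fin m :=
    fun i => Fin.addCases (motive := fun _ => Fin n ⊕ Fin m) Sum.inl Sum.inr i with hgdef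
  refine ⟨finsetISup G₂ (fun T =>
      (finsetIInf T fun N => eqTopF (ofNF n₁ N) g) ⊓
        (finsetIInf Tᶜ fun N => (eqTopF (ofNF n₁ N) g).not)), ?_, ?_⟩
  · exact isQF_iSup _ _ fun T _ =>
      (isQF_iInf _ _ fun N _ => isQF_eqTopF _ _).inf
        (isQF_iInf _ _ fun N _ => (isQF_eqTopF _ _).not)
  · intro a x
    have hg : Sum.elim a x ∘ g = Fin.append a x := elim_comp_addCases a x
    have hstep : ∀ T : Finset (NF (n+m) n₁),
        ((finsetIInf T fun N => eqTopF (ofNF n₁ N) g) ⊓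
          (finsetIInf Tᶜ fun N => (eqTopF (ofNF n₁ N) g).not)).Realize a x
        ↔ tp (n+m) n₁ (Fin.append a x) = T := by
      intro T
      rw [BoundedFormula.realize_inf, realize_finsetIInf,
        realize_finsetIInf, tp_eq_iff]
      apply and_congr
      · exact forall₂_congr fun N _ => by rw [realize_eqTopF, hg, eval_ofNF]
      · constructor
        · intro h N hN
          have := h N (Finset.mem_compl.mpr hN)
          rw [BoundedFormula.realize_not, realize_eqTopF, hg, eval_ofNF] at this
          exact this
        · intro h N hN
          rw [BoundedFormula.realize_not, realize_eqTopF, hg, eval_ofNF]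
          exact h N (Finset.mem_compl.mp hN)
    rw [realize_finsetISup]
    have hPax : (∃ T ∈ G₂, tp (n+m) n₁ (Fin.append a x) = T) ↔ P (Fin.append a x) := by
      constructor
      · rintro ⟨T, hT, hE⟩
        exact (hPG _).mpr (hE ▸ hT)
      · intro h
        exact ⟨tp (n+m) n₁ (Fin.append a x), (hPG _).mp h, rfl⟩
    constructor
    · rintro ⟨T, hT, hreal⟩
      obtain ⟨b, hb⟩ := hPax.mp ⟨T, hT, (hstep T).mp hreal⟩
      refine ⟨b 0, ?_⟩
      have hb' : R (Fin.append (Fin.append a x) (fun _ : Fin 1 => b 0)) := by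
        have hbe : (fun _ : Fin 1 => b 0) = b := funext fun k => by
          rw [Subsingleton.elim k 0]
        rw [hbe]
        exact hb
      have ea : (Fin.append (Fin.append a x) (fun _ : Fin 1 => b 0)) ∘
          Fin.castAdd (m+1) = a := append_comp_castAdd a x (b 0)
      have eb : (Fin.append (Fin.append a x) (fun _ : Fin 1 => b 0)) ∘
          Fin.natAdd n = Fin.snoc x (b 0) := append_comp_natAdd a x (b 0)
      have hb'' : θ.Realize ((Fin.append (Fin.append a x) (fun _ : Fin 1 => b 0)) ∘
          Fin.castAdd (m+1)) ((Fin.append (Fin.append a x) (fun _ : Fin 1 => b 0)) ∘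
          Fin.natAdd n) := hb'
      rw [ea, eb] at hb''
      exact hb''
    · rintro ⟨b, hb⟩
      have ea : (Fin.append (Fin.append a x) (fun _ : Fin 1 => b)) ∘
          Fin.castAdd (m+1) = a := append_comp_castAdd a x b
      have eb : (Fin.append (Fin.append a x) (fun _ : Fin 1 => b)) ∘
          Fin.natAdd n = Fin.snoc x b := append_comp_natAdd a x b
      have hb' : R (Fin.append (Fin.append a x) (fun _ : Fin 1 => b)) := by
        show θ.Realize _ _
        rw [ea, eb]
        exact hb
      have hP : P (Fin.append a x) := ⟨fun _ => b, hb'⟩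
      obtain ⟨T, hT, hE⟩ := hPax.mpr hP
      exact ⟨T, hT, (hstep T).mpr hE⟩

/-! #### Full quantifier elimination from the QE property -/

lemma master (hQE : HasQEProp A) {n : ℕ} : ∀ {mm : ℕ} (φ : LHA.BoundedFormula (Fin n) mm),
    ∃ ψ : LHA.BoundedFormula (Fin n) mm, ψ.IsQF ∧
      ∀ (a : Fin n → A) (x : Fin mm → A), (φ.Realize a x ↔ ψ.Realize a x) := by
  intro mm φ
  induction φ with
  | falsum => exact ⟨_, BoundedFormula.isQF_bot, fun a x => Iff.rfl⟩
  | equal t₁ t₂ =>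
    exact ⟨_, (BoundedFormula.IsAtomic.equal t₁ t₂).isQF, fun a x => Iff.rfl⟩
  | rel R ts => exact Empty.elim R
  | imp φ₁ φ₂ ih₁ ih₂ =>
    obtain ⟨ψ₁, h₁, e₁⟩ := ih₁
    obtain ⟨ψ₂, h₂, e₂⟩ := ih₂
    refine ⟨ψ₁.imp ψ₂, h₁.imp h₂, fun a x => ?_⟩
    rw [BoundedFormula.realize_imp, BoundedFormula.realize_imp, e₁, e₂]
  | all φ' ih =>
    obtain ⟨ψ', hψ', eψ'⟩ := ih
    obtain ⟨χ, hχ, eχ⟩ := exElim hQE ψ'.not hψ'.not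
    refine ⟨χ.not, hχ.not, fun a x => ?_⟩
    rw [BoundedFormula.realize_not, BoundedFormula.realize_all, eχ]
    push_neg
    refine forall_congr' fun b => ?_
    rw [eψ', BoundedFormula.realize_not, not_not]


/-! #### The solvability formula for a system presented by normal forms -/

/-- Splitting map `Fin (l+1) → Fin l ⊕ Fin 1`. -/
def gSplit (l : ℕ) : Fin (l+1) → Fin l ⊕ Fin 1 :=
  fun i => Fin.addCases (motive := fun _ => Fin l ⊕ Fin 1) Sum.inl Sum.inr i

/-- The first-order formula expressing solvability of the system `(N, S)`. -/
noncomputable def sysFormula (l d : ℕ) (N : NF (l+1) d) (S : Finset (NF (l+1) d)) :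
    LHA.Formula (Fin l) :=
  BoundedFormula.ex ((eqTopF (ofNF d N) (gSplit l)) ⊓
    finsetIInf S fun Mx => (eqTopF (ofNF d Mx) (gSplit l)).not)

lemma realize_sysFormula {l d : ℕ} (N : NF (l+1) d) (S : Finset (NF (l+1) d))
    (a : Fin l → A) :
    (sysFormula l d N S).Realize a ↔ ∃ bb : Fin 1 → A,
      evalNF d N (Fin.append a bb) = ⊤ ∧
        ∀ Mx ∈ S, evalNF d Mx (Fin.append a bb) ≠ ⊤ := by
  have hbody : ∀ xs : Fin 1 → A,
      ((eqTopF (ofNF d N) (gSplit l)) ⊓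
        (finsetIInf S fun Mx => (eqTopF (ofNF d Mx) (gSplit l)).not)).Realize a xs
      ↔ (evalNF d N (Fin.append a xs) = ⊤ ∧
          ∀ Mx ∈ S, evalNF d Mx (Fin.append a xs) ≠ ⊤) := by
    intro xs
    have hg : Sum.elim a xs ∘ (gSplit l) = Fin.append a xs := elim_comp_addCases a xs
    rw [BoundedFormula.realize_inf, realize_eqTopF, hg, eval_ofNF,
      realize_finsetIInf]
    refine and_congr Iff.rfl (forall₂_congr fun Mx _ => ?_)
    rw [BoundedFormula.realize_not, realize_eqTopF, hg, eval_ofNF]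
  show BoundedFormula.Realize (BoundedFormula.ex _) a default ↔ _
  rw [BoundedFormula.realize_ex]
  constructor
  · rintro ⟨b, hb⟩
    exact ⟨Fin.snoc default b, (hbody _).mp hb⟩
  · rintro ⟨bb, hbb⟩
    refine ⟨bb 0, (hbody _).mpr ?_⟩
    have hb : Fin.snoc (default : Fin 0 → A) (bb 0) = bb := funext fun k => by
      have hk0 : k = 0 := Fin.ext (Nat.lt_one_iff.mp k.isLt)
      rw [hk0]; simp [Fin.snoc]
    rw [hb]
    exact hbb

/-- Transfer of `typeDet` to formulas (zero bound variables). -/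
lemma typeDetFormula {l : ℕ} {ψ : LHA.Formula (Fin l)} (hψ : ψ.IsQF) :
    ∃ D : ℕ, ∀ a a' : Fin l → A, SimDeg D a a' → (ψ.Realize a ↔ ψ.Realize a') := by
  obtain ⟨D, hD⟩ := typeDet (A := A) hψ
  refine ⟨D, fun a a' hs => ?_⟩
  have conv : ∀ u : Fin l → A,
      (BoundedFormula.Realize ψ (u ∘ Fin.castAdd 0) (u ∘ Fin.natAdd l) ↔
        BoundedFormula.Realize ψ u default) := by
    intro u
    have h1 : (u ∘ Fin.castAdd 0) = u := funext fun _ => rfl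
    have h2 : (u ∘ Fin.natAdd l) = (default : Fin 0 → A) := funext fun z => z.elim0
    rw [h1, h2]
  exact (conv a).symm.trans ((hD a a' hs).trans (conv a'))

end QEAux

/-- A Heyting algebra has the QE property iff its complete theory eliminates quantifiers:
every formula is equivalent in `A` to a quantifier-free formula. -/
theorem hasQEProp_iff_quantifier_elimination (A : Type*) [HeytingAlgebra A] :
    HasQEProp A ↔
      ∀ (n : ℕ) (φ : LHA.Formula (Fin n)), ∃ ψ : LHA.Formula (Fin n),
        ψ.IsQF ∧ ∀ a : Fin n → A, φ.Realize a ↔ ψ.Realize a := by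
  constructor
  · intro hQE n φ
    obtain ⟨ψ, hψ, e⟩ := QEAux.master (A := A) hQE φ
    exact ⟨ψ, hψ, fun a => e a default⟩
  · intro hqe l d
    classical
    choose ψ hψqf hψ using fun N S => hqe l (QEAux.sysFormula l d N S)
    choose D hD using fun N S => QEAux.typeDetFormula (A := A) (hψqf N S)
    have hIdx : IndexProp A l d ((Finset.univ :
        Finset (QEAux.NF (l+1) d × Finset (QEAux.NF (l+1) d))).sup
      (fun p => D p.1 p.2)) := by
      intro a a' hsim κ t s hdt hds
      set N := QEAux.toNF t d hdt with hN
      set S := Finset.image (fun k => QEAux.toNF (s k) d (hds k)) Finset.univ with hS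
      have hsol : ∀ c : Fin l → A,
          HasSolution t s c ↔ (QEAux.sysFormula l d N S).Realize c := by
        intro c
        rw [QEAux.realize_sysFormula]
        unfold HasSolution IsSolution
        refine exists_congr fun b => and_congr ?_ ?_
        · rw [QEAux.evalNF_toNF]
        · constructor
          · intro h Mx hMx
            simp only [hS, Finset.mem_image, Finset.mem_univ, true_and] at hMx
            obtain ⟨k, rfl⟩ := hMx
            rw [QEAux.evalNF_toNF]
            exact h k
          · intro h k
            have hh := h _ (Finset.mem_image_of_mem _ (Finset.mem_univ k))
            rw [QEAux.evalNF_toNF] at hh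
            exact hh
      rw [hsol a, hsol a', hψ N S a, hψ N S a']
      exact hD N S a a'
        (QEAux.simDeg_mono
          (Finset.le_sup (f := fun p => D p.1 p.2) (Finset.mem_univ (N, S))) hsim)
    exact lt_of_le_of_lt (sInf_le ⟨_, rfl, hIdx⟩) (WithTop.coe_lt_top _)
end
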